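/- arXiv:2505.19921 — 3 statements merged into one kernel-verified Lean document; each statement's English description precedes it below -/
import Mathlib

section
/- Let k be a field, V a k-vector space, A = S(V) the symmetric algebra, and M an A-central A-bimodule (i.e. a·m = m·a for all a ∈ A, m ∈ M). Then the Koszul cohomology differential vanishes: for every p ≥ 0 and every k-linear map f : W_p → M, b_K(f) = 0. Consequently the Koszul cohomology is HK^p(A,M) = Hom_k(W_p, M) for all p. -/
open TensorProduct PiTensorProduct

set_option maxHeartbeats 1600000
set_option synthInstance.maxHeartbeats 400000

noncomputable section

variable (k : Type*) [Field k] (V : Type*) [AddCommGroup V] [Module k V]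

/-- The `p`-th tensor power of `V` over `k`. -/
abbrev TP (p : ℕ) := PiTensorProduct k (fun _ : Fin p => V)

/-- The antisymmetrizer map `Ant_p : V^{⊗p} → V^{⊗p}`,
`v_1 ⊗ ⋯ ⊗ v_p ↦ Σ_σ sgn(σ) v_{σ⁻¹(1)} ⊗ ⋯ ⊗ v_{σ⁻¹(p)}`. -/
def Ant (p : ℕ) : TP k V p →ₗ[k] TP k V p :=
  ∑ σ : Equiv.Perm (Fin p),
    (Equiv.Perm.sign σ : ℤ) • (PiTensorProduct.reindex k (fun _ : Fin p => V) σ).toLinearMap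

/-- Canonical identification of tensor powers of equal degrees. -/
def tpCast {m n : ℕ} (h : m = n) : TP k V m ≃ₗ[k] TP k V n :=
  PiTensorProduct.reindex k (fun _ : Fin m => V) (finCongr h)

/-- The canonical identification `V^{⊗p} ⊗ V^{⊗q} ≅ V^{⊗(p+q)}`. -/
def tpMul (p q : ℕ) : (TP k V p ⊗[k] TP k V q) ≃ₗ[k] TP k V (p + q) :=
  (PiTensorProduct.tmulEquiv (ι := Fin p) (ι₂ := Fin q) k V).trans
    (PiTensorProduct.reindex k (fun _ => V) finSumFinEquiv)

/-- The canonical identification `V^{⊗1} ≅ V`. -/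
def oneEquiv : TP k V 1 ≃ₗ[k] V := PiTensorProduct.subsingletonEquiv (0 : Fin 1)

/-- The canonical identification `V^{⊗0} ≅ k`. -/
def zeroEquiv : TP k V 0 ≃ₗ[k] k := PiTensorProduct.isEmptyEquiv (Fin 0)

/-- The image of `V^{⊗i} ⊗ R ⊗ V^{⊗j}` in `V^{⊗(i+2+j)}`. -/
def sandwich (Rq : Submodule k (TP k V 2)) (i j : ℕ) : Submodule k (TP k V (i + 2 + j)) :=
  LinearMap.range
    ((tpCast k V (show i + (2 + j) = i + 2 + j by omega)).toLinearMap ∘ₗ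
      (tpMul k V i (2 + j)).toLinearMap ∘ₗ
      (LinearMap.lTensor (TP k V i)
        ((tpMul k V 2 j).toLinearMap ∘ₗ LinearMap.rTensor (TP k V j) Rq.subtype)))

/-- The subspaces `W_p = ⋂_{i+2+j=p} V^{⊗i} ⊗ R ⊗ V^{⊗j}` (with `W_0 = k`, `W_1 = V`,
`W_2 = R`, these being the degenerate cases of the intersection). -/
def W (Rq : Submodule k (TP k V 2)) (p : ℕ) : Submodule k (TP k V p) :=
  ⨅ (i : ℕ) (j : ℕ) (h : i + 2 + j = p),
    Submodule.map (tpCast k V h).toLinearMap (sandwich k V Rq i j)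

instance instTPAddCommGroup (p : ℕ) : AddCommGroup (TP k V p) := inferInstance

instance instWAddCommGroup (Rq : Submodule k (TP k V 2)) (p : ℕ) :
    AddCommGroup (W k V Rq p) := Submodule.addCommGroup _

instance instWModule (Rq : Submodule k (TP k V 2)) (p : ℕ) :
    Module k (W k V Rq p) := Submodule.module _
variable (Rq : Submodule k (TP k V 2))

/-- A chosen `k`-linear projection of `V^{⊗p}` onto `W_p` (used only to produce canonical
restriction maps: all maps defined with it are independent of the choice on the relevant
subspaces). -/
def projW (p : ℕ) : TP k V p →ₗ[k] (W k V Rq p) :=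
  (LinearMap.exists_leftInverse_of_injective (W k V Rq p).subtype
    (Submodule.ker_subtype _)).choose

/-- The inclusion `W_r ⊆ W_p ⊗ W_q` (for `p + q = r`), decomposing a Koszul element. -/
def splitAt (p q r : ℕ) (h : p + q = r) :
    (W k V Rq r) →ₗ[k] (W k V Rq p) ⊗[k] (W k V Rq q) :=
  (TensorProduct.map (projW k V Rq p) (projW k V Rq q)) ∘ₗ
    (tpMul k V p q).symm.toLinearMap ∘ₗ (tpCast k V h.symm).toLinearMap ∘ₗ
    (W k V Rq r).subtype

/-- The identification `W_1 = V`. -/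
def oneW : (W k V Rq 1) →ₗ[k] V := (oneEquiv k V).toLinearMap ∘ₗ (W k V Rq 1).subtype

/-- Transport along an equality of degrees. -/
def wCast {a b : ℕ} (h : a = b) : (W k V Rq a) ≃ₗ[k] (W k V Rq b) := by
  subst h; exact LinearEquiv.refl k _

/-- The identification `V^{⊗2} ≅ V ⊗ V`. -/
def tp2 : TP k V 2 ≃ₗ[k] V ⊗[k] V :=
  (tpMul k V 1 1).symm ≪≫ₗ TensorProduct.congr (oneEquiv k V) (oneEquiv k V)

/-- The linear map `V ⊗ V → T(V)`, `x ⊗ y ↦ ι(x)·ι(y)`, precomposed with `V^{⊗2} ≅ V ⊗ V`. -/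
def emb2 : TP k V 2 →ₗ[k] TensorAlgebra k V :=
  LinearMap.mul' k (TensorAlgebra k V) ∘ₗ
    TensorProduct.map (TensorAlgebra.ι k) (TensorAlgebra.ι k) ∘ₗ (tp2 k V).toLinearMap

/-- The quadratic algebra `A = T(V)/(R)` associated with a subspace `R ⊆ V ⊗ V`. -/
def QuadAlg := RingQuot (fun a b : TensorAlgebra k V => a ∈ Submodule.map (emb2 k V) Rq ∧ b = 0)

instance : Ring (QuadAlg k V Rq) := by unfold QuadAlg; infer_instance
instance : Algebra k (QuadAlg k V Rq) := by unfold QuadAlg; infer_instance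

/-- The canonical linear map `V → A = T(V)/(R)`. -/
def ιQ : V →ₗ[k] QuadAlg k V Rq :=
  (RingQuot.mkAlgHom k _).toLinearMap ∘ₗ TensorAlgebra.ι k

/-- The subspace of `V^{⊗2}` spanned by the elements `x ⊗ y - y ⊗ x`. -/
def Rsym : Submodule k (TP k V 2) :=
  Submodule.span k {w : TP k V 2 | ∃ x y : V, w = (tp2 k V).symm (x ⊗ₜ[k] y - y ⊗ₜ[k] x)}

/-- The symmetric algebra `S(V) = T(V)/(R)` as a quadratic algebra. -/
def SV := QuadAlg k V (Rsym k V)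

instance : Ring (SV k V) := by unfold SV; infer_instance
instance : Algebra k (SV k V) := by unfold SV; infer_instance
/-- An (`k`-central) `A`-bimodule structure on a `k`-module `M`: commuting `k`-bilinear
left and right unital associative actions of `A`. -/
structure KBimod (A : Type*) [Ring A] [Algebra k A]
    (M : Type*) [AddCommGroup M] [Module k M] where
  actl : A →ₗ[k] M →ₗ[k] M
  actr : A →ₗ[k] M →ₗ[k] M
  actl_one : ∀ m, actl 1 m = m
  actl_mul : ∀ a b m, actl (a * b) m = actl a (actl b m)
  actr_one : ∀ m, actr 1 m = m
  actr_mul : ∀ a b m, actr (a * b) m = actr b (actr a m)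
  actl_actr : ∀ a b m, actl a (actr b m) = actr b (actl a m)

variable {A : Type*} [Ring A] [Algebra k A]
variable {M : Type*} [AddCommGroup M] [Module k M]

/-- The tautological bimodule structure of an algebra over itself. -/
def bimodSelf : KBimod k A A where
  actl := LinearMap.mul k A
  actr := (LinearMap.mul k A).flip
  actl_one := fun m => one_mul m
  actl_mul := fun a b m => mul_assoc a b m
  actr_one := fun m => mul_one m
  actr_mul := fun a b m => (mul_assoc m a b).symm
  actl_actr := fun a b m => (mul_assoc a m b).symm

variable {k}

/-- Left action as a map `A ⊗ M → M`. -/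
def actLA (ρ : KBimod k A M) : A ⊗[k] M →ₗ[k] M := TensorProduct.lift ρ.actl

/-- Right action as a map `M ⊗ A → M`. -/
def actRA (ρ : KBimod k A M) : M ⊗[k] A →ₗ[k] M := TensorProduct.lift ρ.actr.flip

variable {V}

/-- Left action of `V` (through `ιA : V → A`) as a map `V ⊗ M → M`. -/
def actLV (ιA : V →ₗ[k] A) (ρ : KBimod k A M) : V ⊗[k] M →ₗ[k] M :=
  actLA ρ ∘ₗ LinearMap.rTensor M ιA

/-- Right action of `V` (through `ιA : V → A`) as a map `M ⊗ V → M`. -/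
def actRV (ιA : V →ₗ[k] A) (ρ : KBimod k A M) : M ⊗[k] V →ₗ[k] M :=
  actRA ρ ∘ₗ LinearMap.lTensor M ιA

/-- Left action of `V` in the form `M ⊗ V → M`, `m ⊗ v ↦ v·m`. -/
def actLV' (ιA : V →ₗ[k] A) (ρ : KBimod k A M) : M ⊗[k] V →ₗ[k] M :=
  actLV ιA ρ ∘ₗ (TensorProduct.comm k M V).toLinearMap

variable (k V)

/-- The Koszul cohomology differential
`b_K : Hom(W_p, M) → Hom(W_{p+1}, M)`,
`b_K(f)(x_1⋯x_{p+1}) = f(x_1⋯x_p)·x_{p+1} - (-1)^p x_1·f(x_2⋯x_{p+1})`. -/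
def bK (ιA : V →ₗ[k] A) (ρ : KBimod k A M) (p : ℕ) :
    ((W k V Rq p) →ₗ[k] M) →ₗ[k] ((W k V Rq (p+1)) →ₗ[k] M) :=
  (LinearMap.lcomp k M
      ((LinearMap.lTensor (W k V Rq p) (oneW k V Rq)) ∘ₗ splitAt k V Rq p 1 (p+1) rfl)) ∘ₗ
    (LinearMap.llcomp k _ _ M (actRV ιA ρ)) ∘ₗ (LinearMap.rTensorHom V)
  - ((-1 : ℤ)^p) •
  ((LinearMap.lcomp k M
      ((LinearMap.rTensor (W k V Rq p) (oneW k V Rq)) ∘ₗ splitAt k V Rq 1 p (p+1) (by omega))) ∘ₗ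
    (LinearMap.llcomp k _ _ M (actLV ιA ρ)) ∘ₗ (LinearMap.lTensorHom V))

/-- The Koszul homology differential
`b^K : M ⊗ W_{p+1} → M ⊗ W_p`,
`b^K(m ⊗ x_1⋯x_{p+1}) = (m·x_1) ⊗ x_2⋯x_{p+1} + (-1)^{p+1} (x_{p+1}·m) ⊗ x_1⋯x_p`. -/
def bKh (ιA : V →ₗ[k] A) (ρ : KBimod k A M) (p : ℕ) :
    M ⊗[k] (W k V Rq (p+1)) →ₗ[k] M ⊗[k] (W k V Rq p) :=
  (LinearMap.rTensor (W k V Rq p) (actRV ιA ρ)) ∘ₗ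
    (TensorProduct.assoc k M V (W k V Rq p)).symm.toLinearMap ∘ₗ
    (LinearMap.lTensor M
      ((LinearMap.rTensor (W k V Rq p) (oneW k V Rq)) ∘ₗ splitAt k V Rq 1 p (p+1) (by omega)))
  + ((-1 : ℤ)^(p+1)) •
  ((LinearMap.rTensor (W k V Rq p) (actLV' ιA ρ)) ∘ₗ
    (TensorProduct.assoc k M V (W k V Rq p)).symm.toLinearMap ∘ₗ
    (LinearMap.lTensor M
      ((TensorProduct.comm k (W k V Rq p) V).toLinearMap ∘ₗ
        (LinearMap.lTensor (W k V Rq p) (oneW k V Rq)) ∘ₗ splitAt k V Rq p 1 (p+1) rfl)))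

/-- Koszul cup product of an `M`-valued cochain (on the left) with an `A`-valued cochain
(on the right): `(f ⌣_K g)(x_1⋯x_r) = (-1)^{pq} f(x_1⋯x_p)·g(x_{p+1}⋯x_r)`. -/
def cupMA (ρ : KBimod k A M) (p q r : ℕ) (h : p + q = r)
    (f : (W k V Rq p) →ₗ[k] M) (g : (W k V Rq q) →ₗ[k] A) : (W k V Rq r) →ₗ[k] M :=
  ((-1 : ℤ)^(p*q)) • (actRA ρ ∘ₗ TensorProduct.map f g ∘ₗ splitAt k V Rq p q r h)

/-- Koszul cup product of an `A`-valued cochain (on the left) with an `M`-valued cochain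
(on the right): `(f ⌣_K g)(x_1⋯x_r) = (-1)^{pq} f(x_1⋯x_p)·g(x_{p+1}⋯x_r)`. -/
def cupAM (ρ : KBimod k A M) (p q r : ℕ) (h : p + q = r)
    (f : (W k V Rq p) →ₗ[k] A) (g : (W k V Rq q) →ₗ[k] M) : (W k V Rq r) →ₗ[k] M :=
  ((-1 : ℤ)^(p*q)) • (actLA ρ ∘ₗ TensorProduct.map f g ∘ₗ splitAt k V Rq p q r h)

/-- Left Koszul cap product `g ⌢_K -` of an `A`-valued `q`-cochain with Koszul chains:
`g ⌢_K (m ⊗ x_1⋯x_r) = (-1)^{(r-q)q} (g(x_{s+1}⋯x_r)·m) ⊗ x_1⋯x_s` where `s = r - q`. -/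
def capL (ρ : KBimod k A M) (q s r : ℕ) (h : s + q = r) (g : (W k V Rq q) →ₗ[k] A) :
    M ⊗[k] (W k V Rq r) →ₗ[k] M ⊗[k] (W k V Rq s) :=
  ((-1 : ℤ)^(s*q)) •
    ((LinearMap.rTensor (W k V Rq s)
        (actLA ρ ∘ₗ (TensorProduct.comm k M A).toLinearMap ∘ₗ LinearMap.lTensor M g)) ∘ₗ
      (TensorProduct.assoc k M (W k V Rq q) (W k V Rq s)).symm.toLinearMap ∘ₗ
      (LinearMap.lTensor M
        ((TensorProduct.comm k (W k V Rq s) (W k V Rq q)).toLinearMap ∘ₗ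
          splitAt k V Rq s q r h)))

/-- Right Koszul cap product `- ⌢_K g` of Koszul chains with an `A`-valued `q`-cochain:
`(m ⊗ x_1⋯x_r) ⌢_K g = (-1)^{qr} (m·g(x_1⋯x_q)) ⊗ x_{q+1}⋯x_r`. -/
def capR (ρ : KBimod k A M) (q s r : ℕ) (h : q + s = r) (g : (W k V Rq q) →ₗ[k] A) :
    M ⊗[k] (W k V Rq r) →ₗ[k] M ⊗[k] (W k V Rq s) :=
  ((-1 : ℤ)^(q*r)) •
    ((LinearMap.rTensor (W k V Rq s) (actRA ρ ∘ₗ LinearMap.lTensor M g)) ∘ₗ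
      (TensorProduct.assoc k M (W k V Rq q) (W k V Rq s)).symm.toLinearMap ∘ₗ
      (LinearMap.lTensor M (splitAt k V Rq q s r h)))
variable (A)

/-- The `p`-th term `A ⊗ W_p ⊗ A` of the bimodule Koszul complex `K(A)`. -/
abbrev Kc (p : ℕ) := (A ⊗[k] (W k V Rq p)) ⊗[k] A

variable {A}

/-- `A ⊗ V → A`, `a ⊗ v ↦ a·ι(v)`. -/
def mulV (ιA : V →ₗ[k] A) : A ⊗[k] V →ₗ[k] A :=
  LinearMap.mul' k A ∘ₗ LinearMap.lTensor A ιA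

/-- `V ⊗ A → A`, `v ⊗ a ↦ ι(v)·a`. -/
def vMul (ιA : V →ₗ[k] A) : V ⊗[k] A →ₗ[k] A :=
  LinearMap.mul' k A ∘ₗ LinearMap.rTensor A ιA

/-- The differential of the bimodule Koszul complex `K(A)`:
`d(α ⊗ x_1⋯x_{p+1} ⊗ β) = (α x_1) ⊗ x_2⋯x_{p+1} ⊗ β + (-1)^{p+1} α ⊗ x_1⋯x_p ⊗ (x_{p+1} β)`. -/
def dK (ιA : V →ₗ[k] A) (p : ℕ) : Kc k V Rq A (p+1) →ₗ[k] Kc k V Rq A p :=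
  (LinearMap.rTensor A
    ((LinearMap.rTensor (W k V Rq p) (mulV k V ιA)) ∘ₗ
      (TensorProduct.assoc k A V (W k V Rq p)).symm.toLinearMap ∘ₗ
      (LinearMap.lTensor A
        ((LinearMap.rTensor (W k V Rq p) (oneW k V Rq)) ∘ₗ splitAt k V Rq 1 p (p+1) (by omega)))))
  + ((-1 : ℤ)^(p+1)) •
    ((LinearMap.lTensor (A ⊗[k] (W k V Rq p)) (vMul k V ιA)) ∘ₗ
      (TensorProduct.assoc k (A ⊗[k] (W k V Rq p)) V A).toLinearMap ∘ₗ
      (LinearMap.rTensor A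
        ((TensorProduct.assoc k A (W k V Rq p) V).symm.toLinearMap ∘ₗ
          (LinearMap.lTensor A
            ((LinearMap.lTensor (W k V Rq p) (oneW k V Rq)) ∘ₗ splitAt k V Rq p 1 (p+1) rfl)))))

/-- The map `φ̃ : A^e ⊗ W_p → K(A)_p`, `(α ⊗ β) ⊗ w ↦ β ⊗ w ⊗ α`. -/
def phiT (p : ℕ) : (A ⊗[k] A) ⊗[k] (W k V Rq p) →ₗ[k] Kc k V Rq A p :=
  (TensorProduct.comm k A (A ⊗[k] (W k V Rq p))).toLinearMap ∘ₗ
    (TensorProduct.assoc k A A (W k V Rq p)).toLinearMap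

/-- The left cap action of an `A`-valued `p`-cochain on the Koszul complex:
`f ⌢_K (α ⊗ x_1⋯x_r ⊗ β) = (-1)^{(r-p)p} α ⊗ x_1⋯x_s ⊗ (f(x_{s+1}⋯x_r)β)`, `s = r - p`. -/
def capKL (p s r : ℕ) (h : s + p = r) (f : (W k V Rq p) →ₗ[k] A) :
    Kc k V Rq A r →ₗ[k] Kc k V Rq A s :=
  ((-1 : ℤ)^(s*p)) •
    ((LinearMap.lTensor (A ⊗[k] (W k V Rq s))
        (LinearMap.mul' k A ∘ₗ LinearMap.rTensor A f)) ∘ₗ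
      (TensorProduct.assoc k (A ⊗[k] (W k V Rq s)) (W k V Rq p) A).toLinearMap ∘ₗ
      (LinearMap.rTensor A
        ((TensorProduct.assoc k A (W k V Rq s) (W k V Rq p)).symm.toLinearMap ∘ₗ
          (LinearMap.lTensor A (splitAt k V Rq s p r h)))))

/-- The right cap action of an `A`-valued `p`-cochain on the Koszul complex:
`(α ⊗ x_1⋯x_r ⊗ β) ⌢_K f = (-1)^{pr} (α f(x_1⋯x_p)) ⊗ x_{p+1}⋯x_r ⊗ β`. -/
def capKR (p s r : ℕ) (h : p + s = r) (f : (W k V Rq p) →ₗ[k] A) :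
    Kc k V Rq A r →ₗ[k] Kc k V Rq A s :=
  ((-1 : ℤ)^(p*r)) •
    (LinearMap.rTensor A
      ((LinearMap.rTensor (W k V Rq s) (LinearMap.mul' k A ∘ₗ LinearMap.lTensor A f)) ∘ₗ
        (TensorProduct.assoc k A (W k V Rq p) (W k V Rq s)).symm.toLinearMap ∘ₗ
        (LinearMap.lTensor A (splitAt k V Rq p s r h))))

/-- Right multiplication by `β ⊗ α` in the enveloping algebra `A^e = A ⊗ A^{op}`:
`(x ⊗ y) ↦ xβ ⊗ αy`. -/
def aeR (bb aa : A) : (A ⊗[k] A) →ₗ[k] A ⊗[k] A :=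
  TensorProduct.map (LinearMap.mulRight k bb) (LinearMap.mulLeft k aa)

/-- The bimodule `A^e = A ⊗ A^{op}` (via its left regular `A^e`-module structure):
`a·(α ⊗ β)·b = aα ⊗ βb`. -/
def bimodAe : KBimod k A (A ⊗[k] A) where
  actl := (LinearMap.rTensorHom A) ∘ₗ (LinearMap.mul k A)
  actr := (LinearMap.lTensorHom A) ∘ₗ (LinearMap.mul k A).flip
  actl_one := fun m => by
    induction m using TensorProduct.induction_on with
    | zero => simp
    | tmul x y => simp
    | add x y hx hy => simp_all
  actl_mul := fun a b m => by
    induction m using TensorProduct.induction_on with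
    | zero => simp
    | tmul x y => simp [mul_assoc]
    | add x y hx hy => simp_all
  actr_one := fun m => by
    induction m using TensorProduct.induction_on with
    | zero => simp
    | tmul x y => simp
    | add x y hx hy => simp_all
  actr_mul := fun a b m => by
    induction m using TensorProduct.induction_on with
    | zero => simp
    | tmul x y => simp [mul_assoc]
    | add x y hx hy => simp_all
  actl_actr := fun a b m => by
    induction m using TensorProduct.induction_on with
    | zero => simp
    | tmul x y => simp
    | add x y hx hy => simp_all
/-- `(p, n-p)`-shuffles: permutations increasing on the first `p` and on the last `n - p`
positions. -/
def IsShuffle (n p : ℕ) (σ : Equiv.Perm (Fin n)) : Prop :=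
  (∀ i j : Fin n, (i : ℕ) < p → (j : ℕ) < p → i < j → σ i < σ j) ∧
  (∀ i j : Fin n, p ≤ (i : ℕ) → p ≤ (j : ℕ) → i < j → σ i < σ j)

variable {n : ℕ}

/-- The element `[x_{c(1)} ∧ ⋯ ∧ x_{c(p)}] = Ant_p(x_{c(1)} ⊗ ⋯ ⊗ x_{c(p)})` of `W_p`. -/
def wedgeB (x : Module.Basis (Fin n) k V) (p : ℕ) (c : Fin p → Fin n) : W k V Rq p :=
  projW k V Rq p (Ant k V p (PiTensorProduct.tprod k (fun i => x (c i))))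

open Classical in
/-- The duality map `θ_M : Hom(W_p, M) → M ⊗ W_{n-p}` (with `s = n - p`), i.e. the Koszul cap
product with the fundamental class `c = 1 ⊗ [x_1 ∧ ⋯ ∧ x_n]`:
`θ_M(f) = (-1)^{np} Σ_{σ ∈ Sh(p,s)} sgn(σ) f([x_{σ(1)} ∧ ⋯ ∧ x_{σ(p)}]) ⊗
[x_{σ(p+1)} ∧ ⋯ ∧ x_{σ(n)}]`. -/
def theta (x : Module.Basis (Fin n) k V) (p s : ℕ) (h : p + s = n) :
    ((W k V Rq p) →ₗ[k] M) →ₗ[k] M ⊗[k] (W k V Rq s) :=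
  ((-1 : ℤ)^(n*p)) • ∑ σ : Equiv.Perm (Fin n),
    if IsShuffle n p σ then
      (Equiv.Perm.sign σ : ℤ) •
        (((TensorProduct.mk k M (W k V Rq s)).flip
            (wedgeB k V Rq x s (fun i => σ (Fin.cast h (Fin.natAdd p i))))) ∘ₗ
          (LinearMap.applyₗ (wedgeB k V Rq x p (fun i => σ (Fin.castLE (by omega) i)))))
    else 0

/-- Koszul cocycles: the kernel of `b_K`. -/
def cocycles (ιA : V →ₗ[k] A) (ρ : KBimod k A M) (p : ℕ) :
    Submodule k ((W k V Rq p) →ₗ[k] M) :=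
  LinearMap.ker (bK k V Rq ιA ρ p)

/-- Koszul coboundaries: the image of `b_K` (trivial for `p = 0`). -/
def cobound (ιA : V →ₗ[k] A) (ρ : KBimod k A M) (p : ℕ) :
    Submodule k ((W k V Rq p) →ₗ[k] M) :=
  ⨆ (q : ℕ) (h : q + 1 = p),
    Submodule.map (LinearEquiv.arrowCongr (wCast k V Rq h) (LinearEquiv.refl k M)).toLinearMap
      (LinearMap.range (bK k V Rq ιA ρ q))

/-- Koszul cohomology `HK^p(A, M)`. -/
def HKco (ιA : V →ₗ[k] A) (ρ : KBimod k A M) (p : ℕ) :=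
  (cocycles k V Rq ιA ρ p) ⧸
    (Submodule.comap (cocycles k V Rq ιA ρ p).subtype (cobound k V Rq ιA ρ p))

instance (ιA : V →ₗ[k] A) (ρ : KBimod k A M) (p : ℕ) :
    AddCommGroup (HKco k V Rq ιA ρ p) := by unfold HKco; infer_instance
instance (ιA : V →ₗ[k] A) (ρ : KBimod k A M) (p : ℕ) :
    Module k (HKco k V Rq ιA ρ p) := by unfold HKco; infer_instance

/-- Koszul cycles: the kernel of `b^K` (everything in degree `0`). -/
def cycles (ιA : V →ₗ[k] A) (ρ : KBimod k A M) (d : ℕ) :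
    Submodule k (M ⊗[k] (W k V Rq d)) :=
  ⨅ (e : ℕ) (h : e + 1 = d),
    LinearMap.ker ((bKh k V Rq ιA ρ e) ∘ₗ
      (TensorProduct.congr (LinearEquiv.refl k M) (wCast k V Rq h.symm)).toLinearMap)

/-- Koszul boundaries: the image of `b^K`. -/
def bound (ιA : V →ₗ[k] A) (ρ : KBimod k A M) (d : ℕ) :
    Submodule k (M ⊗[k] (W k V Rq d)) :=
  LinearMap.range (bKh k V Rq ιA ρ d)

instance instCyclesAddCommGroup (ιA : V →ₗ[k] A) (ρ : KBimod k A M) (d : ℕ) :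
    AddCommGroup ↥(cycles k V Rq ιA ρ d) := Submodule.addCommGroup _

instance instCyclesModule (ιA : V →ₗ[k] A) (ρ : KBimod k A M) (d : ℕ) :
    Module k ↥(cycles k V Rq ιA ρ d) := Submodule.module _

/-- Koszul homology `HK_d(A, M)`. -/
def HKho (ιA : V →ₗ[k] A) (ρ : KBimod k A M) (d : ℕ) :=
  ↥(cycles k V Rq ιA ρ d) ⧸
    (Submodule.comap (cycles k V Rq ιA ρ d).subtype (bound k V Rq ιA ρ d))

instance (ιA : V →ₗ[k] A) (ρ : KBimod k A M) (d : ℕ) :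
    AddCommGroup (HKho k V Rq ιA ρ d) := by unfold HKho; infer_instance
instance (ιA : V →ₗ[k] A) (ρ : KBimod k A M) (d : ℕ) :
    Module k (HKho k V Rq ιA ρ d) := by unfold HKho; infer_instance

end

/-- The canonical linear map `V → S(V)`. -/
noncomputable def ιS (k : Type*) [Field k] (V : Type*) [AddCommGroup V] [Module k V] :
    V →ₗ[k] SV k V := ιQ k V (Rsym k V)

noncomputable section AuxProof

open TensorProduct PiTensorProduct

variable {k : Type*} [Field k] {V : Type*} [AddCommGroup V] [Module k V]

lemma aux_finsymm_lt {a b : ℕ} (m : Fin (a+b)) (hm : (m:ℕ) < a) :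
    finSumFinEquiv.symm m = Sum.inl ⟨(m:ℕ), hm⟩ := by
  rw [Equiv.symm_apply_eq]
  exact Fin.ext (by simp)

lemma aux_finsymm_ge {a b : ℕ} (m : Fin (a+b)) (hm : a ≤ (m:ℕ)) :
    finSumFinEquiv.symm m = Sum.inr ⟨(m:ℕ) - a, by omega⟩ := by
  rw [Equiv.symm_apply_eq]
  apply Fin.ext
  simp only [finSumFinEquiv_apply_right, Fin.coe_natAdd, Fin.val_mk]
  omega

lemma aux_elim_finsymm {a b : ℕ} {α : Sort*} (f : Fin a → α) (g : Fin b → α) (m : Fin (a+b)) :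
    Sum.elim f g (finSumFinEquiv.symm m) =
      if hm : (m:ℕ) < a then f ⟨(m:ℕ), hm⟩ else g ⟨(m:ℕ) - a, by omega⟩ := by
  rcases lt_or_ge ((m:ℕ)) a with hm | hm
  · rw [aux_finsymm_lt m hm, dif_pos hm]
    rfl
  · rw [aux_finsymm_ge m hm, dif_neg (not_lt.mpr hm)]
    rfl

lemma aux_tpMul_tprod {a b : ℕ} (f : Fin a → V) (g : Fin b → V) :
    tpMul k V a b (PiTensorProduct.tprod k f ⊗ₜ[k] PiTensorProduct.tprod k g) =
      PiTensorProduct.tprod k (fun m => Sum.elim f g (finSumFinEquiv.symm m)) := by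
  simp [tpMul]

lemma aux_tpCast_tprod {a b : ℕ} (h : a = b) (f : Fin a → V) :
    tpCast k V h (PiTensorProduct.tprod k f)
      = PiTensorProduct.tprod k (fun m => f (Fin.cast h.symm m)) := by
  simp [tpCast]

lemma aux_finCongr_trans {a b c : ℕ} (h : a = b) (h' : b = c) :
    (finCongr h).trans (finCongr h') = finCongr (h.trans h') := by
  ext x
  rfl

lemma aux_tpCast_tpCast {a b c : ℕ} (h : a = b) (h' : b = c) (x : TP k V a) :
    tpCast k V h' (tpCast k V h x) = tpCast k V (h.trans h') x := by
  have h2 := reindex_reindex (R := k) (s := fun _ : Fin a => V) (finCongr h) (finCongr h') x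
  rw [aux_finCongr_trans] at h2
  exact h2

lemma aux_tpCast_symm {a b : ℕ} (h : a = b) :
    (tpCast k V h).symm = tpCast k V h.symm := by
  simp only [tpCast, reindex_symm, finCongr_symm]

lemma aux_tpCast_eq_self {a : ℕ} (h : a = a) (x : TP k V a) : tpCast k V h x = x := by
  simp [tpCast, show finCongr h = Equiv.refl (Fin a) from Equiv.ext fun i => Fin.ext rfl]

lemma aux_oneEquiv_symm (v : V) :
    (oneEquiv k V).symm v = PiTensorProduct.tprod k (fun _ => v) := by
  rw [LinearEquiv.symm_apply_eq]
  simp [oneEquiv]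

lemma aux_tp2_symm_tmul (a b : V) :
    (tp2 k V).symm (a ⊗ₜ[k] b)
      = PiTensorProduct.tprod k (fun m : Fin 2 => if (m:ℕ) = 0 then a else b) := by
  have h1 : (tp2 k V).symm (a ⊗ₜ[k] b)
      = tpMul k V 1 1 ((PiTensorProduct.tprod k (fun _ => a)) ⊗ₜ[k]
          (PiTensorProduct.tprod k (fun _ => b))) := by
    simp [tp2, aux_oneEquiv_symm, TensorProduct.congr_symm_tmul]
  rw [h1, aux_tpMul_tprod]
  refine congrArg (PiTensorProduct.tprod k) (funext fun m => ?_)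
  rw [aux_elim_finsymm]
  rcases Nat.lt_or_ge (m:ℕ) 1 with hm | hm
  · rw [dif_pos hm]
    simp [show (m:ℕ) = 0 by omega]
  · rw [dif_neg (by omega)]
    simp [show ¬((m:ℕ) = 0) by omega]

/-- The explicit coordinate function of a sandwich generator. -/
def auxG (i j n : ℕ) (h : i + (2+j) = n) (f : Fin i → V) (g : Fin j → V) (a b : V) :
    Fin n → V := fun m =>
  if hlt : (m:ℕ) < i then f ⟨(m:ℕ), hlt⟩
  else if h0 : (m:ℕ) = i then a
  else if h1 : (m:ℕ) = i + 1 then b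
  else g ⟨(m:ℕ) - (i+2), by omega⟩

lemma auxEval (i j n : ℕ) (h : i + (2+j) = n) (f : Fin i → V) (g : Fin j → V) (a b : V) :
    tpCast k V h (tpMul k V i (2+j) ((PiTensorProduct.tprod k f) ⊗ₜ[k]
      tpMul k V 2 j (((tp2 k V).symm (a ⊗ₜ[k] b)) ⊗ₜ[k] (PiTensorProduct.tprod k g)))) =
    PiTensorProduct.tprod k (auxG i j n h f g a b) := by
  rw [aux_tp2_symm_tmul, aux_tpMul_tprod, aux_tpMul_tprod, aux_tpCast_tprod]
  refine congrArg (PiTensorProduct.tprod k) (funext fun m => ?_)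
  simp only [aux_elim_finsymm, Fin.coe_cast, Fin.val_mk, auxG]
  split_ifs <;>
    first
      | rfl
      | omega
      | (exfalso; omega)
      | (exact congrArg f (Fin.ext (by simp only [Fin.val_mk]; omega)))
      | (exact congrArg g (Fin.ext (by simp only [Fin.val_mk]; omega)))

lemma auxG_swap (i j n : ℕ) (h : i + (2+j) = n) (f : Fin i → V) (g : Fin j → V) (a b : V)
    (m : Fin n) :
    auxG i j n h f g a b (Equiv.swap ⟨i, by omega⟩ ⟨i+1, by omega⟩ m) =
      auxG i j n h f g b a m := by
  by_cases h0 : m = (⟨i, by omega⟩ : Fin n)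
  · rw [h0, Equiv.swap_apply_left]
    simp only [auxG, Fin.val_mk]
    split_ifs <;> first | rfl | omega | (exfalso; omega)
  · by_cases h1 : m = (⟨i+1, by omega⟩ : Fin n)
    · rw [h1, Equiv.swap_apply_right]
      simp only [auxG, Fin.val_mk]
      split_ifs <;> first | rfl | omega | (exfalso; omega)
    · rw [Equiv.swap_apply_of_ne_of_ne h0 h1]
      have hv0 : ¬((m:ℕ) = i) := fun hh => h0 (Fin.ext hh)
      have hv1 : ¬((m:ℕ) = i+1) := fun hh => h1 (Fin.ext hh)
      simp only [auxG]
      split_ifs <;> first | rfl | omega | (exfalso; omega)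

/-- The sandwich inclusion with the middle factor as a parameter. -/
def auxB (i j n : ℕ) (h : i + (2+j) = n) (v : TP k V 2) :
    (TP k V i ⊗[k] TP k V j) →ₗ[k] TP k V n :=
  (tpCast k V h).toLinearMap ∘ₗ (tpMul k V i (2+j)).toLinearMap ∘ₗ
    LinearMap.lTensor (TP k V i)
      ((tpMul k V 2 j).toLinearMap ∘ₗ TensorProduct.mk k (TP k V 2) (TP k V j) v)

lemma auxB_tmul (i j n : ℕ) (h : i + (2+j) = n) (v : TP k V 2) (t : TP k V i) (u : TP k V j) :
    auxB i j n h v (t ⊗ₜ[k] u)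
      = tpCast k V h (tpMul k V i (2+j) (t ⊗ₜ[k] tpMul k V 2 j (v ⊗ₜ[k] u))) := rfl

lemma auxB_swap (i j n : ℕ) (h : i + (2+j) = n) (a b : V) (z : TP k V i ⊗[k] TP k V j) :
    reindex k (fun _ : Fin n => V) (Equiv.swap ⟨i, by omega⟩ ⟨i+1, by omega⟩)
      (auxB i j n h ((tp2 k V).symm (a ⊗ₜ[k] b)) z)
    = auxB i j n h ((tp2 k V).symm (b ⊗ₜ[k] a)) z := by
  induction z using TensorProduct.induction_on with
  | zero => simp
  | add x y hx hy => rw [map_add, map_add, map_add, hx, hy]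
  | tmul t u =>
    induction t using PiTensorProduct.induction_on with
    | smul_tprod c f =>
      induction u using PiTensorProduct.induction_on with
      | smul_tprod c' g =>
        have hsm : (c • PiTensorProduct.tprod k f) ⊗ₜ[k] (c' • PiTensorProduct.tprod k g)
            = c' • c • ((PiTensorProduct.tprod k f) ⊗ₜ[k] (PiTensorProduct.tprod k g)) := by
          rw [tmul_smul, ← smul_tmul']
        have hcore : reindex k (fun _ : Fin n => V) (Equiv.swap ⟨i, by omega⟩ ⟨i+1, by omega⟩)
            (auxB i j n h ((tp2 k V).symm (a ⊗ₜ[k] b))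
              ((PiTensorProduct.tprod k f) ⊗ₜ[k] (PiTensorProduct.tprod k g)))
            = auxB i j n h ((tp2 k V).symm (b ⊗ₜ[k] a))
              ((PiTensorProduct.tprod k f) ⊗ₜ[k] (PiTensorProduct.tprod k g)) := by
          rw [auxB_tmul, auxB_tmul, auxEval, auxEval, reindex_tprod]
          refine congrArg (PiTensorProduct.tprod k) (funext fun m => ?_)
          rw [Equiv.symm_swap]
          exact auxG_swap i j n h f g a b m
        rw [hsm, map_smul, map_smul, map_smul, map_smul, hcore, map_smul, map_smul]
      | add x y hx hy =>
        rw [tmul_add, map_add, map_add, map_add, hx, hy]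
    | add x y hx hy =>
      rw [add_tmul, map_add, map_add, map_add, hx, hy]

lemma auxB_add (i j n : ℕ) (h : i + (2+j) = n) (v v' : TP k V 2)
    (z : TP k V i ⊗[k] TP k V j) :
    auxB i j n h (v + v') z = auxB i j n h v z + auxB i j n h v' z := by
  induction z using TensorProduct.induction_on with
  | zero => simp
  | add x y hx hy =>
    rw [map_add, map_add, map_add, hx, hy]
    abel
  | tmul t u =>
    simp only [auxB_tmul, add_tmul, tmul_add, map_add]

lemma auxB_smul (i j n : ℕ) (h : i + (2+j) = n) (c : k) (v : TP k V 2)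
    (z : TP k V i ⊗[k] TP k V j) :
    auxB i j n h (c • v) z = c • auxB i j n h v z := by
  induction z using TensorProduct.induction_on with
  | zero => simp
  | add x y hx hy =>
    rw [map_add, map_add, hx, hy, smul_add]
  | tmul t u =>
    rw [auxB_tmul, auxB_tmul, ← smul_tmul', map_smul, tmul_smul, map_smul, map_smul]

lemma auxB_sub (i j n : ℕ) (h : i + (2+j) = n) (v v' : TP k V 2)
    (z : TP k V i ⊗[k] TP k V j) :
    auxB i j n h (v - v') z = auxB i j n h v z - auxB i j n h v' z := by
  rw [sub_eq_add_neg, auxB_add, ← neg_one_smul k v', auxB_smul, neg_one_smul, sub_eq_add_neg]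

lemma auxB_zero (i j n : ℕ) (h : i + (2+j) = n) (z : TP k V i ⊗[k] TP k V j) :
    auxB i j n h 0 z = 0 := by
  rw [show (0 : TP k V 2) = (0:k) • (0 : TP k V 2) from (zero_smul k _).symm, auxB_smul,
    zero_smul]

lemma auxB_neg_of_mem (i j n : ℕ) (h : i + (2+j) = n) (v : TP k V 2)
    (hv : v ∈ Rsym k V) (z : TP k V i ⊗[k] TP k V j) :
    reindex k (fun _ : Fin n => V) (Equiv.swap ⟨i, by omega⟩ ⟨i+1, by omega⟩)
      (auxB i j n h v z) = - auxB i j n h v z := by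
  rw [Rsym] at hv
  induction hv using Submodule.span_induction with
  | mem x hx =>
    obtain ⟨x0, y0, rfl⟩ := hx
    rw [map_sub, auxB_sub, map_sub, auxB_swap, auxB_swap, neg_sub]
  | zero =>
    rw [auxB_zero, map_zero, neg_zero]
  | add x y hx hy hpx hpy =>
    rw [auxB_add, map_add, hpx, hpy, neg_add]
  | smul c x hx hpx =>
    rw [auxB_smul, map_smul, hpx, smul_neg]

lemma aux_swap_sandwich {n : ℕ} (i j : ℕ) (h : i+2+j = n) (w : TP k V n)
    (hw : w ∈ Submodule.map (tpCast k V h).toLinearMap (sandwich k V (Rsym k V) i j)) :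
    reindex k (fun _ : Fin n => V) (Equiv.swap ⟨i, by omega⟩ ⟨i+1, by omega⟩) w = -w := by
  obtain ⟨x, hx, rfl⟩ := hw
  obtain ⟨y, rfl⟩ := hx
  have hcn : i + (2+j) = n := by omega
  induction y using TensorProduct.induction_on with
  | zero => simp
  | add x y hx hy =>
    simp only [map_add]
    rw [hx, hy, neg_add]
  | tmul t z =>
    induction z using TensorProduct.induction_on with
    | zero => simp
    | add x y hx hy =>
      simp only [tmul_add, map_add]
      rw [hx, hy, neg_add]
    | tmul r u =>
      have key : (tpCast k V h).toLinearMap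
          (((tpCast k V (show i + (2+j) = i+2+j by omega)).toLinearMap ∘ₗ
            (tpMul k V i (2+j)).toLinearMap ∘ₗ
            (LinearMap.lTensor (TP k V i)
              ((tpMul k V 2 j).toLinearMap ∘ₗ
                LinearMap.rTensor (TP k V j) (Rsym k V).subtype)))
            (t ⊗ₜ[k] (r ⊗ₜ[k] u)))
          = auxB i j n hcn r.1 (t ⊗ₜ[k] u) := by
        simp only [LinearMap.comp_apply, LinearMap.lTensor_tmul, LinearMap.rTensor_tmul,
          LinearEquiv.coe_coe, Submodule.coe_subtype, auxB_tmul]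
        rw [aux_tpCast_tpCast]
      rw [key]
      exact auxB_neg_of_mem i j n hcn r.1 r.2 (t ⊗ₜ[k] u)

lemma aux_mem_sandwich {n : ℕ} (w : TP k V n) {Rq : Submodule k (TP k V 2)}
    (hw : w ∈ W k V Rq n) (i j : ℕ) (h : i+2+j = n) :
    w ∈ Submodule.map (tpCast k V h).toLinearMap (sandwich k V Rq i j) := by
  simp only [W, Submodule.mem_iInf] at hw
  exact hw i j h

lemma aux_swapW {n : ℕ} (w : TP k V n) (hw : w ∈ W k V (Rsym k V) n)
    (i : ℕ) (hi : i + 1 < n) :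
    reindex k (fun _ : Fin n => V) (Equiv.swap ⟨i, by omega⟩ ⟨i+1, hi⟩) w = -w :=
  aux_swap_sandwich i (n-i-2) (by omega) w (aux_mem_sandwich w hw i (n-i-2) (by omega))

/-- The partial rotation permutations. -/
def auxCyc (p : ℕ) : ℕ → Equiv.Perm (Fin (p+1))
  | 0 => Equiv.refl _
  | m+1 => (auxCyc p m).trans (Equiv.swap ⟨p-m-1, by omega⟩ ⟨p-m, by omega⟩)

lemma auxCyc_apply (p : ℕ) (m : ℕ) (hm : m ≤ p) (v : Fin (p+1)) :
    auxCyc p m v = if (v:ℕ) < p-m then v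
      else if h2 : (v:ℕ) = p then ⟨p-m, by omega⟩
      else ⟨(v:ℕ)+1, by have := v.isLt; omega⟩ := by
  induction m with
  | zero =>
    simp only [auxCyc, Equiv.refl_apply]
    split_ifs with h1 h2
    · rfl
    · exact Fin.ext (by simp only [Fin.val_mk]; omega)
    · exact absurd v.isLt (by omega)
  | succ m ih =>
    have hv := v.isLt
    rw [auxCyc, Equiv.trans_apply, ih (by omega)]
    clear ih
    by_cases h1 : (v:ℕ) < p-m-1
    · rw [if_pos (show (v:ℕ) < p-m by omega), if_pos (show (v:ℕ) < p-(m+1) by omega)]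
      exact Equiv.swap_apply_of_ne_of_ne
        (fun hh => by
          have h5 := congrArg Fin.val hh
          simp only [Fin.val_mk] at h5
          omega)
        (fun hh => by
          have h5 := congrArg Fin.val hh
          simp only [Fin.val_mk] at h5
          omega)
    · by_cases h2 : (v:ℕ) = p-m-1
      · rw [if_pos (show (v:ℕ) < p-m by omega), if_neg (show ¬((v:ℕ) < p-(m+1)) by omega),
          dif_neg (show ¬((v:ℕ) = p) by omega)]
        have hveq : v = (⟨p-m-1, by omega⟩ : Fin (p+1)) :=
          Fin.ext (by simp only [Fin.val_mk]; omega)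
        conv_lhs => rw [hveq, Equiv.swap_apply_left]
        exact Fin.ext (by simp only [Fin.val_mk]; omega)
      · by_cases h3 : (v:ℕ) = p
        · rw [if_neg (show ¬((v:ℕ) < p-m) by omega), dif_pos h3,
            if_neg (show ¬((v:ℕ) < p-(m+1)) by omega), dif_pos h3]
          rw [Equiv.swap_apply_right]
          exact Fin.ext (by simp only [Fin.val_mk]; omega)
        · rw [if_neg (show ¬((v:ℕ) < p-m) by omega), dif_neg h3,
            if_neg (show ¬((v:ℕ) < p-(m+1)) by omega), dif_neg h3]
          exact Equiv.swap_apply_of_ne_of_ne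
            (fun hh => by
              have h5 := congrArg Fin.val hh
              simp only [Fin.val_mk] at h5
              omega)
            (fun hh => by
              have h5 := congrArg Fin.val hh
              simp only [Fin.val_mk] at h5
              omega)

lemma aux_reindex_cyc_W (p : ℕ) (m : ℕ) (hm : m ≤ p) (w : TP k V (p+1))
    (hw : w ∈ W k V (Rsym k V) (p+1)) :
    reindex k (fun _ : Fin (p+1) => V) (auxCyc p m) w = ((-1:ℤ)^m) • w := by
  induction m with
  | zero => simp [auxCyc]
  | succ m ih =>
    rw [auxCyc, ← reindex_reindex, ih (by omega), map_zsmul]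
    have hsw : Equiv.swap (⟨p-m-1, by omega⟩ : Fin (p+1)) ⟨p-m, by omega⟩
        = Equiv.swap ⟨p-m-1, by omega⟩ ⟨(p-m-1)+1, by omega⟩ := by
      exact congrArg _ (Fin.ext (by simp only [Fin.val_mk]; omega))
    rw [hsw, aux_swapW w hw (p-m-1) (by omega), pow_succ, mul_smul]
    simp

/-- The rotation map, as a composite of splittings. -/
def auxRot (p : ℕ) : TP k V (p+1) →ₗ[k] TP k V (p+1) :=
  (tpCast k V (show 1+p = p+1 by omega)).toLinearMap ∘ₗ (tpMul k V 1 p).toLinearMap ∘ₗ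
    (TensorProduct.comm k (TP k V p) (TP k V 1)).toLinearMap ∘ₗ
    (tpMul k V p 1).symm.toLinearMap

lemma auxRot_eq (p : ℕ) :
    auxRot (k := k) (V := V) p
      = (reindex k (fun _ : Fin (p+1) => V) (auxCyc p p)).toLinearMap := by
  apply PiTensorProduct.ext
  refine MultilinearMap.ext fun F => ?_
  simp only [LinearMap.compMultilinearMap_apply, LinearEquiv.coe_coe, reindex_tprod]
  have h1 : (tpMul k V p 1).symm (PiTensorProduct.tprod k F)
      = (PiTensorProduct.tprod k (fun i : Fin p => F (Fin.castAdd 1 i))) ⊗ₜ[k]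
        (PiTensorProduct.tprod k (fun i : Fin 1 => F (Fin.natAdd p i))) := by
    rw [LinearEquiv.symm_apply_eq, aux_tpMul_tprod]
    refine congrArg (PiTensorProduct.tprod k) (funext fun m => ?_)
    rw [aux_elim_finsymm]
    by_cases hm : (m:ℕ) < p
    · rw [dif_pos hm]
      exact congrArg F (Fin.ext rfl)
    · rw [dif_neg hm]
      exact congrArg F (Fin.ext (by
        show (m:ℕ) = p + ((m:ℕ) - p)
        have := m.isLt
        omega))
  rw [auxRot]
  simp only [LinearMap.comp_apply, LinearEquiv.coe_coe]
  rw [h1]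
  rw [TensorProduct.comm_tmul, aux_tpMul_tprod, aux_tpCast_tprod]
  refine congrArg (PiTensorProduct.tprod k) (funext fun m => ?_)
  rw [aux_elim_finsymm]
  have hsymm : (auxCyc p p).symm m
      = if (m:ℕ) = 0 then ⟨p, by omega⟩ else ⟨(m:ℕ)-1, by omega⟩ := by
    by_cases hm : (m:ℕ) = 0
    · rw [if_pos hm, Equiv.symm_apply_eq, auxCyc_apply p p le_rfl]
      rw [if_neg (by show ¬(p < p - p); omega), dif_pos (by show p = p; rfl)]
      exact Fin.ext (by show (m:ℕ) = p - p; omega)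
    · rw [if_neg hm, Equiv.symm_apply_eq, auxCyc_apply p p le_rfl]
      rw [if_neg (by show ¬((m:ℕ)-1 < p - p); omega),
        dif_neg (by show ¬((m:ℕ)-1 = p); have := m.isLt; omega)]
      exact Fin.ext (by show (m:ℕ) = (m:ℕ) - 1 + 1; have := m.isLt; omega)
  rw [hsymm]
  by_cases hm : (m:ℕ) = 0
  · rw [dif_pos (by simp only [Fin.coe_cast]; omega), if_pos hm]
    exact congrArg F (Fin.ext (by
      simp only [Fin.coe_natAdd, Fin.coe_cast, Fin.val_mk]
      omega))
  · rw [dif_neg (by simp only [Fin.coe_cast]; omega), if_neg hm]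
    exact congrArg F (Fin.ext (by
      simp only [Fin.coe_castAdd, Fin.coe_cast, Fin.val_mk]))

lemma aux_mem_W_one {Rq : Submodule k (TP k V 2)} (x : TP k V 1) : x ∈ W k V Rq 1 := by
  simp only [W, Submodule.mem_iInf]
  intro i j h
  omega

lemma aux_projW_comp (Rq : Submodule k (TP k V 2)) (p : ℕ) :
    (projW k V Rq p) ∘ₗ (W k V Rq p).subtype = LinearMap.id :=
  (LinearMap.exists_leftInverse_of_injective (W k V Rq p).subtype
    (Submodule.ker_subtype _)).choose_spec

lemma aux_projW_val (Rq : Submodule k (TP k V 2)) (p : ℕ) (y : W k V Rq p) :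
    projW k V Rq p y.1 = y :=
  LinearMap.congr_fun (aux_projW_comp Rq p) y

lemma aux_projW_one (Rq : Submodule k (TP k V 2)) (x : TP k V 1) :
    ((W k V Rq 1).subtype (projW k V Rq 1 x)) = x := by
  have h2 : projW k V Rq 1 x = ⟨x, aux_mem_W_one x⟩ :=
    aux_projW_val Rq 1 ⟨x, aux_mem_W_one x⟩
  rw [h2]
  rfl

lemma aux_oneW_projW (Rq : Submodule k (TP k V 2)) :
    (oneW k V Rq) ∘ₗ projW k V Rq 1 = (oneEquiv k V).toLinearMap := by
  apply LinearMap.ext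
  intro x
  simp only [LinearMap.comp_apply, oneW, aux_projW_one]

section Act

variable {M : Type*} [AddCommGroup M] [Module k M]

lemma aux_act (ρ : KBimod k (SV k V) M)
    (hcentral : ∀ (a : SV k V) (m : M), ρ.actl a m = ρ.actr a m)
    (p : ℕ) (g : TP k V p →ₗ[k] M) (t : TP k V p ⊗[k] TP k V 1) :
    actRV (ιS k V) ρ (TensorProduct.map g (oneEquiv k V).toLinearMap t)
      = actLV (ιS k V) ρ (TensorProduct.map (oneEquiv k V).toLinearMap g
          (TensorProduct.comm k (TP k V p) (TP k V 1) t)) := by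
  induction t using TensorProduct.induction_on with
  | zero => simp
  | add x y hx hy => simp only [map_add, hx, hy]
  | tmul x y =>
    simp only [TensorProduct.map_tmul, TensorProduct.comm_tmul, actRV, actLV, actRA, actLA,
      LinearMap.comp_apply, LinearMap.lTensor_tmul, LinearMap.rTensor_tmul,
      TensorProduct.lift.tmul, LinearMap.flip_apply, LinearEquiv.coe_coe]
    exact (hcentral _ _).symm

end Act

end AuxProof

/-- STATEMENT 3 proof. -/
theorem statement3 (k : Type*) [Field k] (V : Type*) [AddCommGroup V] [Module k V]
    (M : Type*) [AddCommGroup M] [Module k M] (ρ : KBimod k (SV k V) M)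
    (hcentral : ∀ (a : SV k V) (m : M), ρ.actl a m = ρ.actr a m)
    (p : ℕ) (f : (W k V (Rsym k V) p) →ₗ[k] M) :
    bK k V (Rsym k V) (ιS k V) ρ p f = 0 := by
  apply LinearMap.ext
  intro w
  rw [LinearMap.zero_apply]
  have h1p : 1 + p = p + 1 := by omega
  have hsplit1 : splitAt k V (Rsym k V) p 1 (p+1) rfl w
      = TensorProduct.map (projW k V (Rsym k V) p) (projW k V (Rsym k V) 1)
          ((tpMul k V p 1).symm w.1) := by
    simp only [splitAt, LinearMap.comp_apply, LinearEquiv.coe_coe, Submodule.coe_subtype]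
    rw [aux_tpCast_eq_self]
  have hsplit2 : splitAt k V (Rsym k V) 1 p (p+1) h1p w
      = TensorProduct.map (projW k V (Rsym k V) 1) (projW k V (Rsym k V) p)
          ((tpMul k V 1 p).symm (tpCast k V h1p.symm w.1)) := by
    simp only [splitAt, LinearMap.comp_apply, LinearEquiv.coe_coe, Submodule.coe_subtype]
  have hcomb1 : ∀ x : TP k V p ⊗[k] TP k V 1,
      (LinearMap.rTensor V f) ((LinearMap.lTensor (W k V (Rsym k V) p) (oneW k V (Rsym k V)))
        (TensorProduct.map (projW k V (Rsym k V) p) (projW k V (Rsym k V) 1) x))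
      = TensorProduct.map (f ∘ₗ projW k V (Rsym k V) p) (oneEquiv k V).toLinearMap x := by
    intro x
    induction x using TensorProduct.induction_on with
    | zero => simp
    | add a b ha hb => simp only [map_add, ha, hb]
    | tmul a b =>
      simp only [TensorProduct.map_tmul, LinearMap.lTensor_tmul, LinearMap.rTensor_tmul,
        LinearMap.comp_apply]
      rw [show oneW k V (Rsym k V) (projW k V (Rsym k V) 1 b) = oneEquiv k V b from
        LinearMap.congr_fun (aux_oneW_projW (Rsym k V)) b]
      rfl
  have hcomb2 : ∀ x : TP k V 1 ⊗[k] TP k V p,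
      (LinearMap.lTensor V f) ((LinearMap.rTensor (W k V (Rsym k V) p) (oneW k V (Rsym k V)))
        (TensorProduct.map (projW k V (Rsym k V) 1) (projW k V (Rsym k V) p) x))
      = TensorProduct.map (oneEquiv k V).toLinearMap (f ∘ₗ projW k V (Rsym k V) p) x := by
    intro x
    induction x using TensorProduct.induction_on with
    | zero => simp
    | add a b ha hb => simp only [map_add, ha, hb]
    | tmul a b =>
      simp only [TensorProduct.map_tmul, LinearMap.lTensor_tmul, LinearMap.rTensor_tmul,
        LinearMap.comp_apply]
      rw [show oneW k V (Rsym k V) (projW k V (Rsym k V) 1 a) = oneEquiv k V a from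
        LinearMap.congr_fun (aux_oneW_projW (Rsym k V)) a]
      rfl
  have hrotW : auxRot (k := k) (V := V) p w.1 = ((-1:ℤ)^p) • w.1 := by
    rw [auxRot_eq]
    exact aux_reindex_cyc_W p p le_rfl w.1 w.2
  have hrot2 : tpCast k V (show 1+p = p+1 by omega)
      ((tpMul k V 1 p) ((TensorProduct.comm k (TP k V p) (TP k V 1))
      ((tpMul k V p 1).symm w.1))) = ((-1:ℤ)^p) • w.1 := hrotW
  have hrot : (tpMul k V 1 p).symm (tpCast k V h1p.symm w.1)
      = ((-1:ℤ)^p) • (TensorProduct.comm k (TP k V p) (TP k V 1))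
          ((tpMul k V p 1).symm w.1) := by
    have h3 := congrArg (fun z => (tpMul k V 1 p).symm ((tpCast k V h1p).symm z)) hrot2
    simp only [LinearEquiv.symm_apply_apply, map_zsmul] at h3
    rw [← aux_tpCast_symm, h3, smul_smul, ← pow_add, Even.neg_one_pow ⟨p, rfl⟩, one_smul]
  have hbk : bK k V (Rsym k V) (ιS k V) ρ p f w
      = actRV (ιS k V) ρ ((LinearMap.rTensor V f)
          ((LinearMap.lTensor (W k V (Rsym k V) p) (oneW k V (Rsym k V)))
            (splitAt k V (Rsym k V) p 1 (p+1) rfl w)))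
        - ((-1:ℤ)^p) • actLV (ιS k V) ρ ((LinearMap.lTensor V f)
          ((LinearMap.rTensor (W k V (Rsym k V) p) (oneW k V (Rsym k V)))
            (splitAt k V (Rsym k V) 1 p (p+1) h1p w))) := by
    simp only [bK, LinearMap.sub_apply, LinearMap.smul_apply, LinearMap.comp_apply,
      LinearMap.lcomp_apply, LinearMap.llcomp_apply, LinearMap.coe_rTensorHom,
      LinearMap.coe_lTensorHom]
  rw [hbk, hsplit1, hsplit2, hcomb1, hcomb2, hrot, map_zsmul, map_zsmul, smul_smul,
    ← pow_add, Even.neg_one_pow ⟨p, rfl⟩, one_smul,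
    aux_act ρ hcentral p (f ∘ₗ projW k V (Rsym k V) p), sub_self]
end

section
/- Let k be a field, V a k-vector space, A = S(V) the symmetric algebra, and M an A-central A-bimodule (i.e. a·m = m·a for all a ∈ A, m ∈ M). Then the Koszul homology differential vanishes: for every p ≥ 1, b^K = 0 on M ⊗ W_p. Consequently the Koszul homology is HK_p(A,M) = M ⊗ W_p for all p. -/
open TensorProduct PiTensorProduct

set_option maxHeartbeats 1600000
set_option synthInstance.maxHeartbeats 400000

noncomputable section AuxProof

open PiTensorProduct TensorProduct

variable (k : Type*) [Field k] (V : Type*) [AddCommGroup V] [Module k V]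

lemma fin_append_lt {α : Type*} {a b : ℕ} (f : Fin a → α) (g : Fin b → α) (t : Fin (a + b))
    (h : (t : ℕ) < a) : Fin.append f g t = f ⟨(t : ℕ), h⟩ := by
  have ht : t = Fin.castAdd b ⟨(t : ℕ), h⟩ := by ext; rfl
  conv_lhs => rw [ht]
  rw [Fin.append_left]

lemma fin_append_ge {α : Type*} {a b : ℕ} (f : Fin a → α) (g : Fin b → α) (t : Fin (a + b))
    (h : a ≤ (t : ℕ)) : Fin.append f g t = g ⟨(t : ℕ) - a, by have := t.isLt; omega⟩ := by
  have ht : t = Fin.natAdd a ⟨(t : ℕ) - a, by have := t.isLt; omega⟩ := by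
    ext; simp only [Fin.natAdd_mk]; omega
  conv_lhs => rw [ht]
  rw [Fin.append_right]

lemma tpMul_tprod (p q : ℕ) (f : Fin p → V) (g : Fin q → V) :
    tpMul k V p q ((tprod k f) ⊗ₜ[k] (tprod k g)) = tprod k (Fin.append f g) := by
  simp only [tpMul, LinearEquiv.trans_apply, tmulEquiv_apply, reindex_tprod]
  congr 1
  funext t
  rcases lt_or_ge ((t : ℕ)) p with h | h
  · have ht : t = Fin.castAdd q ⟨(t : ℕ), h⟩ := by ext; rfl
    rw [fin_append_lt _ _ _ h]
    conv_lhs => rw [ht]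
    rw [finSumFinEquiv_symm_apply_castAdd]
    rfl
  · have ht : t = Fin.natAdd p ⟨(t : ℕ) - p, by have := t.isLt; omega⟩ := by
      ext; simp only [Fin.natAdd_mk]; omega
    rw [fin_append_ge _ _ _ h]
    conv_lhs => rw [ht]
    rw [finSumFinEquiv_symm_apply_natAdd]
    rfl

lemma tpCast_tprod {m n : ℕ} (h : m = n) (f : Fin m → V) :
    tpCast k V h (tprod k f) = tprod k (fun t => f (Fin.cast h.symm t)) := by
  simp only [tpCast, reindex_tprod]
  rfl

lemma oneEquiv_tprod (f : Fin 1 → V) : oneEquiv k V (tprod k f) = f 0 :=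
  PiTensorProduct.subsingletonEquiv_apply_tprod _ _

lemma oneEquiv_symm (x : V) : (oneEquiv k V).symm x = tprod k (fun _ : Fin 1 => x) :=
  PiTensorProduct.subsingletonEquiv_symm_apply' _ _

lemma append3_val {α : Type*} {i j : ℕ} (f : Fin i → α) (g : Fin 2 → α) (h' : Fin j → α)
    (t : Fin (i + (2 + j))) :
    Fin.append f (Fin.append g h') t =
      if h1 : (t : ℕ) < i then f ⟨(t : ℕ), h1⟩
      else if h2 : (t : ℕ) < i + 2 then g ⟨(t : ℕ) - i, by omega⟩
      else h' ⟨(t : ℕ) - (i + 2), by have := t.isLt; omega⟩ := by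
  rcases lt_or_ge ((t : ℕ)) i with h1 | h1
  · rw [fin_append_lt _ _ _ h1, dif_pos h1]
  · rcases lt_or_ge ((t : ℕ)) (i + 2) with h2 | h2
    · have hlt : (t : ℕ) - i < 2 + j := by have := t.isLt; omega
      have h2' : ((⟨(t : ℕ) - i, hlt⟩ : Fin (2 + j)) : ℕ) < 2 := by
        simp only [Fin.val_mk]; omega
      rw [fin_append_ge _ _ _ h1, fin_append_lt _ _ _ h2',
        dif_neg (show ¬ ((t : ℕ) < i) by omega), dif_pos h2]
    · have hlt : (t : ℕ) - i < 2 + j := by have := t.isLt; omega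
      have h2' : 2 ≤ ((⟨(t : ℕ) - i, hlt⟩ : Fin (2 + j)) : ℕ) := by
        simp only [Fin.val_mk]; omega
      rw [fin_append_ge _ _ _ h1, fin_append_ge _ _ _ h2',
        dif_neg (show ¬ ((t : ℕ) < i) by omega), dif_neg (show ¬ ((t : ℕ) < i + 2) by omega)]
      congr 1 <;> exact Fin.ext (by simp only [Fin.val_mk]; omega)

lemma tp2_symm_tmul (x y : V) :
    (tp2 k V).symm (x ⊗ₜ[k] y) =
      tprod k (Fin.append (fun _ : Fin 1 => x) (fun _ : Fin 1 => y)) := by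
  rw [tp2, LinearEquiv.trans_symm, LinearEquiv.trans_apply, TensorProduct.congr_symm_tmul,
    LinearEquiv.symm_symm, oneEquiv_symm, oneEquiv_symm, tpMul_tprod]

lemma rsym_reindex_swap (r : TP k V 2) (hr : r ∈ Rsym k V) :
    reindex k (fun _ : Fin 2 => V) (Equiv.swap 0 1) r = -r := by
  induction hr using Submodule.span_induction with
  | mem w hw =>
    obtain ⟨x, y, rfl⟩ := hw
    have key : ∀ a b : V, reindex k (fun _ : Fin 2 => V) (Equiv.swap 0 1)
        ((tp2 k V).symm (a ⊗ₜ[k] b)) = (tp2 k V).symm (b ⊗ₜ[k] a) := by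
      intro a b
      rw [tp2_symm_tmul, tp2_symm_tmul, reindex_tprod]
      congr 1
      funext t
      have hA : Fin.append (fun _ : Fin 1 => a) (fun _ : Fin 1 => b) 1 = b :=
        fin_append_ge _ _ 1 (by decide)
      have hB : Fin.append (fun _ : Fin 1 => a) (fun _ : Fin 1 => b) 0 = a :=
        fin_append_lt _ _ 0 (by decide)
      have hC : Fin.append (fun _ : Fin 1 => b) (fun _ : Fin 1 => a) 1 = a :=
        fin_append_ge _ _ 1 (by decide)
      have hD : Fin.append (fun _ : Fin 1 => b) (fun _ : Fin 1 => a) 0 = b :=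
        fin_append_lt _ _ 0 (by decide)
      fin_cases t
      · show Fin.append (fun _ : Fin 1 => a) (fun _ : Fin 1 => b)
            ((Equiv.swap (0 : Fin 2) 1).symm 0)
          = Fin.append (fun _ : Fin 1 => b) (fun _ : Fin 1 => a) 0
        rw [show (Equiv.swap (0 : Fin 2) 1).symm 0 = 1 by simp, hA, hD]
      · show Fin.append (fun _ : Fin 1 => a) (fun _ : Fin 1 => b)
            ((Equiv.swap (0 : Fin 2) 1).symm 1)
          = Fin.append (fun _ : Fin 1 => b) (fun _ : Fin 1 => a) 1
        rw [show (Equiv.swap (0 : Fin 2) 1).symm 1 = 0 by simp, hB, hC]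
    rw [map_sub, map_sub, key, key, neg_sub]
  | zero => simp
  | add u v _ _ hu hv => rw [map_add, hu, hv, neg_add]
  | smul c u _ hu => rw [map_smul, hu, smul_neg]

lemma gswap_eval {α : Type*} (g : Fin 2 → α) (A B : Fin 2) (h : (A : ℕ) + (B : ℕ) = 1) :
    g A = g ((Equiv.swap (0 : Fin 2) 1) B) := by
  fin_cases A <;> fin_cases B <;>
    simp_all [Equiv.swap_apply_left, Equiv.swap_apply_right]

lemma stepA_elt (i j p : ℕ) (hp : i + 2 + j = p) (hij : i + (2 + j) = i + 2 + j)
    (x : TP k V i) (y : TP k V 2) (z : TP k V j) :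
    reindex k (fun _ : Fin p => V) (Equiv.swap ⟨i, by omega⟩ ⟨i + 1, by omega⟩)
      (tpCast k V hp (tpCast k V hij (tpMul k V i (2 + j)
        (x ⊗ₜ[k] (tpMul k V 2 j (y ⊗ₜ[k] z)))))) =
    tpCast k V hp (tpCast k V hij (tpMul k V i (2 + j)
      (x ⊗ₜ[k] (tpMul k V 2 j
        ((reindex k (fun _ : Fin 2 => V) (Equiv.swap 0 1) y) ⊗ₜ[k] z))))) := by
  induction x using PiTensorProduct.induction_on with
  | add u v hu hv => simp only [add_tmul, map_add, hu, hv]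
  | smul_tprod c f =>
    induction y using PiTensorProduct.induction_on with
    | add u v hu hv => simp only [map_add, add_tmul, tmul_add, hu, hv]
    | smul_tprod c' g =>
      induction z using PiTensorProduct.induction_on with
      | add u v hu hv => simp only [map_add, add_tmul, tmul_add, hu, hv]
      | smul_tprod c'' h' =>
        have hpure : reindex k (fun _ : Fin p => V) (Equiv.swap ⟨i, by omega⟩ ⟨i + 1, by omega⟩)
            (tpCast k V hp (tpCast k V hij (tpMul k V i (2 + j)
              ((tprod k f) ⊗ₜ[k] (tpMul k V 2 j ((tprod k g) ⊗ₜ[k] (tprod k h'))))))) =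
          tpCast k V hp (tpCast k V hij (tpMul k V i (2 + j)
            ((tprod k f) ⊗ₜ[k] (tpMul k V 2 j
              ((reindex k (fun _ : Fin 2 => V) (Equiv.swap 0 1) (tprod k g))
                ⊗ₜ[k] (tprod k h')))))) := ?_
        · simp only [← smul_tmul', tmul_smul, map_smul]
          rw [hpure]
        rw [reindex_tprod (Equiv.swap (0 : Fin 2) 1) g]
        rw [tpMul_tprod, tpMul_tprod, tpMul_tprod, tpMul_tprod, tpCast_tprod, tpCast_tprod,
          tpCast_tprod, tpCast_tprod, reindex_tprod]
        congr 1
        funext t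
        have ht := t.isLt
        simp only [Equiv.symm_swap, Fin.coe_cast, append3_val]
        set n := ((Equiv.swap (⟨i, by omega⟩ : Fin p) ⟨i + 1, by omega⟩) t : ℕ) with hn
        rcases Nat.lt_trichotomy ((t : ℕ)) i with h1 | h1 | h1
        · have hsw : n = (t : ℕ) := by
            rw [hn, Equiv.swap_apply_of_ne_of_ne]
            · simp only [ne_eq, Fin.ext_iff, Fin.val_mk]; omega
            · simp only [ne_eq, Fin.ext_iff, Fin.val_mk]; omega
          split_ifs <;> first
            | (exfalso; omega)
            | (congr 1; apply Fin.ext; simp only [Fin.val_mk]; omega)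
            | (exact gswap_eval g _ _ (by simp only [Fin.val_mk]; omega))
        · have hsw : n = i + 1 := by
            have htt : t = ⟨i, by omega⟩ := Fin.ext h1
            rw [hn]
            conv_lhs => rw [htt]
            rw [Equiv.swap_apply_left, Fin.val_mk]
          split_ifs <;> first
            | (exfalso; omega)
            | (congr 1; apply Fin.ext; simp only [Fin.val_mk]; omega)
            | (exact gswap_eval g _ _ (by simp only [Fin.val_mk]; omega))
        · rcases Nat.lt_or_ge ((t : ℕ)) (i + 2) with h2 | h2
          · have hsw : n = i := by
              have htt : t = ⟨i + 1, by omega⟩ := Fin.ext (show (t : ℕ) = i + 1 by omega)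
              rw [hn]
              conv_lhs => rw [htt]
              rw [Equiv.swap_apply_right, Fin.val_mk]
            split_ifs <;> first
              | (exfalso; omega)
              | (congr 1; apply Fin.ext; simp only [Fin.val_mk]; omega)
              | (exact gswap_eval g _ _ (by simp only [Fin.val_mk]; omega))
          · have hsw : n = (t : ℕ) := by
              rw [hn, Equiv.swap_apply_of_ne_of_ne]
              · simp only [ne_eq, Fin.ext_iff, Fin.val_mk]; omega
              · simp only [ne_eq, Fin.ext_iff, Fin.val_mk]; omega
            split_ifs <;> first
              | (exfalso; omega)
              | (congr 1; apply Fin.ext; simp only [Fin.val_mk]; omega)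
              | (exact gswap_eval g _ _ (by simp only [Fin.val_mk]; omega))

lemma mem_W_sandwich {Rq : Submodule k (TP k V 2)} {p : ℕ} {w : TP k V p}
    (hw : w ∈ W k V Rq p) (i j : ℕ) (h : i + 2 + j = p) :
    w ∈ Submodule.map (tpCast k V h).toLinearMap (sandwich k V Rq i j) := by
  have h1 := (Submodule.mem_iInf _).1 hw i
  have h2 := (Submodule.mem_iInf _).1 h1 j
  exact (Submodule.mem_iInf _).1 h2 h

lemma W_swap (i j p : ℕ) (hp : i + 2 + j = p) (w : TP k V p)
    (hw : w ∈ W k V (Rsym k V) p) :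
    reindex k (fun _ : Fin p => V) (Equiv.swap ⟨i, by omega⟩ ⟨i + 1, by omega⟩) w = -w := by
  obtain ⟨x, hx, rfl⟩ := mem_W_sandwich k V hw i j hp
  simp only [sandwich, SetLike.mem_coe, LinearMap.mem_range] at hx
  obtain ⟨z, rfl⟩ := hx
  clear hw
  simp only [LinearEquiv.coe_coe, LinearMap.coe_comp, Function.comp_apply]
  induction z using TensorProduct.induction_on with
  | zero => simp
  | add u v hu hv => simp only [map_add, hu, hv, neg_add]
  | tmul a y =>
    induction y using TensorProduct.induction_on with
    | zero => simp
    | add u v hu hv => simp only [map_add, tmul_add, hu, hv, neg_add]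
    | tmul r b =>
      simp only [LinearMap.lTensor_tmul, LinearMap.rTensor_tmul, LinearMap.coe_comp,
        Function.comp_apply, Submodule.coe_subtype, LinearEquiv.coe_coe]
      rw [stepA_elt k V i j p hp (by omega) a (↑r) b,
        rsym_reindex_swap k V (↑r) r.2]
      simp only [neg_tmul, tmul_neg, map_neg]

/-- The permutation `σ₀ ∘ σ₁ ∘ ⋯ ∘ σ_{m-1}` of `Fin (p+1)` where `σ_i = swap i (i+1)`. -/
def nuPerm (p : ℕ) : ℕ → Equiv.Perm (Fin (p + 1))
  | 0 => Equiv.refl _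
  | m + 1 => (Equiv.swap (⟨min m p, by omega⟩ : Fin (p + 1)) ⟨min (m + 1) p, by omega⟩).trans
      (nuPerm p m)

lemma nuPerm_succ (p m : ℕ) : nuPerm p (m + 1) =
    (Equiv.swap (⟨min m p, by omega⟩ : Fin (p + 1)) ⟨min (m + 1) p, by omega⟩).trans
      (nuPerm p m) := rfl

lemma nuPerm_val (p m : ℕ) (hm : m ≤ p) : ∀ t : Fin (p + 1), ((nuPerm p m t) : ℕ) =
    if (t : ℕ) < m then (t : ℕ) + 1 else if (t : ℕ) = m then 0 else (t : ℕ) := by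
  induction m with
  | zero =>
    intro t
    simp only [nuPerm, Equiv.refl_apply]
    split_ifs <;> omega
  | succ m ih =>
    have hmm : m ≤ p := by omega
    have hb1 : m < p + 1 := Nat.lt_succ_of_le hmm
    have hb2 : m + 1 < p + 1 := Nat.lt_succ_of_le hm
    intro t
    have happ : nuPerm p (m + 1) t =
        nuPerm p m ((Equiv.swap (⟨m, hb1⟩ : Fin (p + 1)) ⟨m + 1, hb2⟩) t) := by
      have e0 : nuPerm p (m + 1) = (Equiv.swap (⟨m, hb1⟩ : Fin (p + 1)) ⟨m + 1, hb2⟩).trans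
          (nuPerm p m) := by
        rw [nuPerm_succ]
        congr 1
        congr 1 <;> exact Fin.ext (by simp only [Fin.val_mk]; omega)
      rw [e0]; rfl
    rw [happ, ih hmm ((Equiv.swap (⟨m, hb1⟩ : Fin (p + 1)) ⟨m + 1, hb2⟩) t)]
    rcases Nat.lt_trichotomy ((t : ℕ)) m with h1 | h1 | h1
    · have hsw : ((Equiv.swap (⟨m, hb1⟩ : Fin (p + 1)) ⟨m + 1, hb2⟩) t : ℕ)
          = (t : ℕ) := by
        rw [Equiv.swap_apply_of_ne_of_ne]
        · simp only [ne_eq, Fin.ext_iff, Fin.val_mk]; omega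
        · simp only [ne_eq, Fin.ext_iff, Fin.val_mk]; omega
      rw [hsw]
      split_ifs <;> omega
    · have hsw : ((Equiv.swap (⟨m, hb1⟩ : Fin (p + 1)) ⟨m + 1, hb2⟩) t : ℕ)
          = m + 1 := by
        have htt : t = ⟨m, hb1⟩ := Fin.ext h1
        conv_lhs => rw [htt]
        rw [Equiv.swap_apply_left, Fin.val_mk]
      rw [hsw]
      split_ifs <;> omega
    · rcases Nat.lt_or_ge ((t : ℕ)) (m + 2) with h2 | h2
      · have hsw : ((Equiv.swap (⟨m, hb1⟩ : Fin (p + 1)) ⟨m + 1, hb2⟩) t : ℕ)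
            = m := by
          have htt : t = ⟨m + 1, hb2⟩ := Fin.ext (show (t : ℕ) = m + 1 by omega)
          conv_lhs => rw [htt]
          rw [Equiv.swap_apply_right, Fin.val_mk]
        rw [hsw]
        split_ifs <;> omega
      · have hsw : ((Equiv.swap (⟨m, hb1⟩ : Fin (p + 1)) ⟨m + 1, hb2⟩) t : ℕ)
            = (t : ℕ) := by
          rw [Equiv.swap_apply_of_ne_of_ne]
          · simp only [ne_eq, Fin.ext_iff, Fin.val_mk]; omega
          · simp only [ne_eq, Fin.ext_iff, Fin.val_mk]; omega
        rw [hsw]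
        split_ifs <;> omega

lemma nuPerm_reindex (p m : ℕ) (hm : m ≤ p) (w : TP k V (p + 1))
    (hw : w ∈ W k V (Rsym k V) (p + 1)) :
    reindex k (fun _ : Fin (p + 1) => V) (nuPerm p m) w = ((-1 : k) ^ m) • w := by
  have H : ∀ m', m' ≤ p →
      reindex k (fun _ : Fin (p + 1) => V) (nuPerm p m') w = ((-1 : k) ^ m') • w := by
    intro m'
    induction m' with
    | zero => intro _; simp [nuPerm]
    | succ m' ih =>
      intro hm'
      have hb1 : m' < p + 1 := by omega
      have hb2 : m' + 1 < p + 1 := by omega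
      have happ : reindex k (fun _ : Fin (p + 1) => V) (nuPerm p (m' + 1)) w =
          reindex k (fun _ : Fin (p + 1) => V) (nuPerm p m')
            (reindex k (fun _ : Fin (p + 1) => V)
              (Equiv.swap (⟨m', hb1⟩ : Fin (p + 1)) ⟨m' + 1, hb2⟩) w) := by
        refine (congrArg (fun σ : Equiv.Perm (Fin (p + 1)) =>
            reindex k (fun _ : Fin (p + 1) => V) σ w) ?_).trans
          (reindex_reindex _ _ w).symm
        rw [nuPerm_succ]
        congr 1
        congr 1 <;> exact Fin.ext (by simp only [Fin.val_mk]; omega)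
      rw [happ, W_swap k V m' (p - 1 - m') (p + 1) (by omega) w hw, map_neg, ih (by omega),
        pow_succ, mul_neg_one, neg_smul]
  exact H m hm


/-- `V^{⊗(p+1)} → V ⊗ V^{⊗p}`, splitting off the first factor. -/
def S1map (p : ℕ) (H : p + 1 = 1 + p) : TP k V (p + 1) →ₗ[k] V ⊗[k] TP k V p :=
  (LinearMap.rTensor (TP k V p) (oneEquiv k V).toLinearMap) ∘ₗ
    (tpMul k V 1 p).symm.toLinearMap ∘ₗ (tpCast k V H).toLinearMap

/-- `V^{⊗(p+1)} → V ⊗ V^{⊗p}`, splitting off the last factor and moving it to the front. -/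
def S2map (p : ℕ) : TP k V (p + 1) →ₗ[k] V ⊗[k] TP k V p :=
  (LinearMap.rTensor (TP k V p) (oneEquiv k V).toLinearMap) ∘ₗ
    (TensorProduct.comm k (TP k V p) (TP k V 1)).toLinearMap ∘ₗ
    (tpMul k V p 1).symm.toLinearMap ∘ₗ (tpCast k V rfl).toLinearMap

lemma tpMul_symm_tprod (a b : ℕ) (u : Fin (a + b) → V) :
    (tpMul k V a b).symm (tprod k u) =
      (tprod k (fun t : Fin a => u (Fin.castAdd b t))) ⊗ₜ[k]
        (tprod k (fun t : Fin b => u (Fin.natAdd a t))) := by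
  rw [LinearEquiv.symm_apply_eq, tpMul_tprod]
  congr 1
  funext t
  rcases lt_or_ge ((t : ℕ)) a with h | h
  · rw [fin_append_lt _ _ _ h]
    exact congrArg u (Fin.ext rfl).symm
  · rw [fin_append_ge _ _ _ h]
    exact congrArg u (Fin.ext (by simp only [Fin.coe_natAdd, Fin.val_mk]; omega)).symm

lemma S1map_tprod (p : ℕ) (H : p + 1 = 1 + p) (f : Fin (p + 1) → V) :
    S1map k V p H (tprod k f) =
      f ⟨0, by omega⟩ ⊗ₜ[k] tprod k (fun t : Fin p => f ⟨(t : ℕ) + 1, by omega⟩) := by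
  rw [S1map]
  simp only [LinearMap.coe_comp, Function.comp_apply, LinearEquiv.coe_coe]
  rw [tpCast_tprod, tpMul_symm_tprod]
  simp only [LinearMap.rTensor_tmul, LinearEquiv.coe_coe, oneEquiv_tprod]
  refine congrArg₂ (fun (u : V) (v : TP k V p) => u ⊗ₜ[k] v) ?_ ?_
  · exact congrArg f (Fin.ext rfl)
  · exact congrArg (fun u : Fin p → V => (PiTensorProduct.tprod k) u) (funext fun t => congrArg f (Fin.ext (by
      simp only [Fin.coe_cast, Fin.coe_natAdd, Fin.val_mk]; omega)))

lemma S2map_tprod (p : ℕ) (f : Fin (p + 1) → V) :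
    S2map k V p (tprod k f) =
      f ⟨p, by omega⟩ ⊗ₜ[k] tprod k (fun t : Fin p => f ⟨(t : ℕ), by omega⟩) := by
  rw [S2map]
  simp only [LinearMap.coe_comp, Function.comp_apply, LinearEquiv.coe_coe]
  rw [tpCast_tprod, tpMul_symm_tprod]
  simp only [TensorProduct.comm_tmul, LinearMap.rTensor_tmul, LinearEquiv.coe_coe, oneEquiv_tprod]
  refine congrArg₂ (fun (u : V) (v : TP k V p) => u ⊗ₜ[k] v) ?_ ?_
  · exact congrArg f (Fin.ext (by
      simp only [Fin.coe_cast, Fin.coe_natAdd, Fin.val_mk]; omega))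
  · exact congrArg (fun u : Fin p → V => (PiTensorProduct.tprod k) u) (funext fun t => congrArg f (Fin.ext (by
      simp only [Fin.coe_cast, Fin.coe_castAdd, Fin.val_mk])))

lemma S1_S2_rel (p : ℕ) (H : p + 1 = 1 + p) (w : TP k V (p + 1))
    (hw : w ∈ W k V (Rsym k V) (p + 1)) :
    S1map k V p H w = ((-1 : k) ^ p) • S2map k V p w := by
  have hmap : S2map k V p = (S1map k V p H) ∘ₗ
      (reindex k (fun _ : Fin (p + 1) => V) (nuPerm p p)).toLinearMap := by
    apply PiTensorProduct.ext
    apply MultilinearMap.ext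
    intro f
    simp only [LinearMap.compMultilinearMap_apply, LinearMap.coe_comp, Function.comp_apply,
      LinearEquiv.coe_coe, reindex_tprod, S1map_tprod, S2map_tprod]
    have h0 : (nuPerm p p).symm ⟨0, by omega⟩ = ⟨p, by omega⟩ := by
      rw [Equiv.symm_apply_eq]
      apply Fin.ext
      rw [nuPerm_val p p (le_refl p)]
      simp only [Fin.val_mk]
      split_ifs <;> omega
    have hs : ∀ t : Fin p, (nuPerm p p).symm ⟨(t : ℕ) + 1, by omega⟩ = ⟨(t : ℕ), by omega⟩ := by
      intro t
      rw [Equiv.symm_apply_eq]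
      apply Fin.ext
      rw [nuPerm_val p p (le_refl p)]
      simp only [Fin.val_mk]
      have := t.isLt
      split_ifs <;> omega
    refine congrArg₂ (fun (u : V) (v : TP k V p) => u ⊗ₜ[k] v) ?_ ?_
    · rw [h0]
    · exact congrArg (fun u : Fin p → V => (PiTensorProduct.tprod k) u) (funext fun t => by rw [hs t])
  have h2 := congrArg (fun (F : TP k V (p + 1) →ₗ[k] V ⊗[k] TP k V p) => F w) hmap
  simp only [LinearMap.coe_comp, Function.comp_apply, LinearEquiv.coe_coe] at h2
  rw [nuPerm_reindex k V p p (le_refl p) w hw, map_smul] at h2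
  rw [h2, smul_smul, ← pow_add]
  have hone : ((-1 : k)) ^ (p + p) = 1 := Even.neg_one_pow ⟨p, rfl⟩
  rw [hone, one_smul]

lemma W_one_top (Rq : Submodule k (TP k V 2)) : W k V Rq 1 = ⊤ := by
  rw [eq_top_iff]
  intro x _
  rw [W, Submodule.mem_iInf]
  intro i
  rw [Submodule.mem_iInf]
  intro j
  rw [Submodule.mem_iInf]
  intro h
  omega

lemma subtype_projW_one (Rq : Submodule k (TP k V 2)) (x : TP k V 1) :
    (W k V Rq 1).subtype (projW k V Rq 1 x) = x := by
  have hx : x ∈ W k V Rq 1 := by rw [W_one_top]; trivial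
  have hspec := (LinearMap.exists_leftInverse_of_injective (W k V Rq 1).subtype
    (Submodule.ker_subtype _)).choose_spec
  have hy := LinearMap.congr_fun hspec ⟨x, hx⟩
  simp only [LinearMap.coe_comp, Function.comp_apply, LinearMap.id_apply] at hy
  calc (W k V Rq 1).subtype (projW k V Rq 1 x)
      = (W k V Rq 1).subtype (projW k V Rq 1 ((W k V Rq 1).subtype ⟨x, hx⟩)) := rfl
    _ = x := by
        rw [show projW k V Rq 1 ((W k V Rq 1).subtype ⟨x, hx⟩) = ⟨x, hx⟩ from hy]
        rfl

lemma oneW_projW (Rq : Submodule k (TP k V 2)) :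
    (oneW k V Rq) ∘ₗ (projW k V Rq 1) = (oneEquiv k V).toLinearMap := by
  apply LinearMap.ext
  intro x
  simp only [oneW, LinearMap.coe_comp, Function.comp_apply, LinearEquiv.coe_coe]
  rw [subtype_projW_one]

lemma L_rel (p : ℕ) (h1 : (1 : ℕ) + p = p + 1) (w : W k V (Rsym k V) (p + 1)) :
    LinearMap.rTensor (W k V (Rsym k V) p) (oneW k V (Rsym k V))
      (splitAt k V (Rsym k V) 1 p (p + 1) h1 w) =
    ((-1 : k) ^ p) • (TensorProduct.comm k (W k V (Rsym k V) p) V)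
      ((LinearMap.lTensor (W k V (Rsym k V) p) (oneW k V (Rsym k V)))
        (splitAt k V (Rsym k V) p 1 (p + 1) rfl w)) := by
  have claimA : ∀ y : TP k V 1 ⊗[k] TP k V p,
      LinearMap.rTensor (W k V (Rsym k V) p) (oneW k V (Rsym k V))
        (TensorProduct.map (projW k V (Rsym k V) 1) (projW k V (Rsym k V) p) y)
      = LinearMap.lTensor V (projW k V (Rsym k V) p)
          (LinearMap.rTensor (TP k V p) (oneEquiv k V).toLinearMap y) := by
    intro y
    induction y using TensorProduct.induction_on with
    | zero => simp
    | add u v hu hv => simp only [map_add, hu, hv]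
    | tmul a b =>
      simp only [TensorProduct.map_tmul, LinearMap.rTensor_tmul, LinearMap.lTensor_tmul,
        LinearEquiv.coe_coe]
      refine congrArg₂ (fun (u : V) (v : W k V (Rsym k V) p) => u ⊗ₜ[k] v)
        (LinearMap.congr_fun (oneW_projW k V (Rsym k V)) a) rfl
  have claimB : ∀ y : TP k V p ⊗[k] TP k V 1,
      (TensorProduct.comm k (W k V (Rsym k V) p) V)
        (LinearMap.lTensor (W k V (Rsym k V) p) (oneW k V (Rsym k V))
          (TensorProduct.map (projW k V (Rsym k V) p) (projW k V (Rsym k V) 1) y))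
      = LinearMap.lTensor V (projW k V (Rsym k V) p)
          (LinearMap.rTensor (TP k V p) (oneEquiv k V).toLinearMap
            ((TensorProduct.comm k (TP k V p) (TP k V 1)) y)) := by
    intro y
    induction y using TensorProduct.induction_on with
    | zero => simp
    | add u v hu hv => simp only [map_add, hu, hv]
    | tmul b a =>
      simp only [TensorProduct.map_tmul, TensorProduct.comm_tmul, LinearMap.rTensor_tmul,
        LinearMap.lTensor_tmul, LinearEquiv.coe_coe]
      refine congrArg₂ (fun (u : V) (v : W k V (Rsym k V) p) => u ⊗ₜ[k] v)
        (LinearMap.congr_fun (oneW_projW k V (Rsym k V)) a) rfl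
  have hsplit1 : splitAt k V (Rsym k V) 1 p (p + 1) h1 w =
      TensorProduct.map (projW k V (Rsym k V) 1) (projW k V (Rsym k V) p)
        ((tpMul k V 1 p).symm (tpCast k V h1.symm ((W k V (Rsym k V) (p + 1)).subtype w))) := rfl
  have hsplit2 : splitAt k V (Rsym k V) p 1 (p + 1) rfl w =
      TensorProduct.map (projW k V (Rsym k V) p) (projW k V (Rsym k V) 1)
        ((tpMul k V p 1).symm (tpCast k V rfl ((W k V (Rsym k V) (p + 1)).subtype w))) := rfl
  rw [hsplit1, hsplit2, claimA, claimB]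
  have hS1 : LinearMap.rTensor (TP k V p) (oneEquiv k V).toLinearMap
      ((tpMul k V 1 p).symm (tpCast k V h1.symm ((W k V (Rsym k V) (p + 1)).subtype w))) =
      S1map k V p h1.symm ((W k V (Rsym k V) (p + 1)).subtype w) := rfl
  have hS2 : LinearMap.rTensor (TP k V p) (oneEquiv k V).toLinearMap
      ((TensorProduct.comm k (TP k V p) (TP k V 1))
        ((tpMul k V p 1).symm (tpCast k V rfl ((W k V (Rsym k V) (p + 1)).subtype w))) ) =
      S2map k V p ((W k V (Rsym k V) (p + 1)).subtype w) := rfl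
  rw [hS1, hS2, S1_S2_rel k V p h1.symm ((W k V (Rsym k V) (p + 1)).subtype w) w.2, map_smul]

end AuxProof

/-- for `A = S(V)` and an `A`-central `A`-bimodule `M`, the Koszul homology
differential vanishes: `b^K = 0` on `M ⊗ W_p` for every `p ≥ 1`. -/
theorem statement4 (k : Type*) [Field k] (V : Type*) [AddCommGroup V] [Module k V]
    (M : Type*) [AddCommGroup M] [Module k M] (ρ : KBimod k (SV k V) M)
    (hcentral : ∀ (a : SV k V) (m : M), ρ.actl a m = ρ.actr a m)
    (p : ℕ) :
    bKh k V (Rsym k V) (ιS k V) ρ p = 0 := by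
  have hact : actLV' (ιS k V) ρ = actRV (ιS k V) ρ := by
    apply TensorProduct.ext'
    intro m v
    simp only [actLV', actLV, actRV, actLA, actRA, LinearMap.coe_comp, Function.comp_apply,
      LinearEquiv.coe_coe, TensorProduct.comm_tmul, LinearMap.rTensor_tmul,
      LinearMap.lTensor_tmul, TensorProduct.lift.tmul, LinearMap.flip_apply]
    exact hcentral _ _
  apply LinearMap.ext
  intro x
  rw [LinearMap.zero_apply, bKh, hact]
  simp only [LinearMap.add_apply, LinearMap.smul_apply, LinearMap.coe_comp, Function.comp_apply,
    LinearEquiv.coe_coe]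
  induction x using TensorProduct.induction_on with
  | zero => simp
  | add u v hu hv =>
    simp only [map_add, smul_add]
    rw [add_add_add_comm, hu, hv, add_zero]
  | tmul m w =>
    simp only [LinearMap.lTensor_tmul, LinearMap.coe_comp, Function.comp_apply,
      LinearEquiv.coe_coe]
    rw [L_rel k V p _ w]
    rw [tmul_smul, map_smul, map_smul]
    rw [← Int.cast_smul_eq_zsmul k ((-1 : ℤ) ^ (p + 1))]
    push_cast
    rw [← add_smul]
    have hsgn : ((-1 : k) ^ p + (-1 : k) ^ (p + 1)) = 0 := by
      rw [pow_succ]; ring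
    rw [hsgn, zero_smul]
end

section
/- Let k be a field, V a finite-dimensional k-vector space, R ⊆ V⊗V a subspace, and A = T(V)/(R) the associated quadratic algebra. Let e_A : W_1 = V → A be the fundamental Koszul 1-cocycle induced by the inclusion of V in A. Then for any A-bimodule M: (i) for every k-linear map f : W_p → M, b_K(f) = −( e_A ⌣_K f − (−1)^p f ⌣_K e_A ); (ii) for every z ∈ M ⊗ W_p, b^K(z) = −( e_A ⌢_K z − (−1)^p z ⌢_K e_A ). -/
open TensorProduct PiTensorProduct

set_option maxHeartbeats 1600000
set_option synthInstance.maxHeartbeats 400000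

/-- the fundamental formulas of Koszul calculus for a quadratic algebra
`A = T(V)/(R)` and any `A`-bimodule `M`, where `e_A : W_1 = V → A` is the fundamental
Koszul 1-cocycle: (i) `b_K(f) = -(e_A ⌣_K f - (-1)^p f ⌣_K e_A)`;
(ii) `b^K(z) = -(e_A ⌢_K z - (-1)^q z ⌢_K e_A)` on chains of degree `q = p + 1`. -/
theorem statement19 (k : Type*) [Field k] (V : Type*) [AddCommGroup V] [Module k V]
    [FiniteDimensional k V] (Rq : Submodule k (TP k V 2))
    (M : Type*) [AddCommGroup M] [Module k M] (ρ : KBimod k (QuadAlg k V Rq) M) :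
    (∀ (p : ℕ) (f : (W k V Rq p) →ₗ[k] M),
      bK k V Rq (ιQ k V Rq) ρ p f
        = -(cupAM k V Rq ρ 1 p (p+1) (by omega) (ιQ k V Rq ∘ₗ oneW k V Rq) f
            - ((-1 : ℤ)^p) •
              cupMA k V Rq ρ p 1 (p+1) rfl f (ιQ k V Rq ∘ₗ oneW k V Rq))) ∧
    (∀ p : ℕ,
      bKh k V Rq (ιQ k V Rq) ρ p
        = -(capL k V Rq ρ 1 p (p+1) (by omega) (ιQ k V Rq ∘ₗ oneW k V Rq)
            - ((-1 : ℤ)^(p+1)) •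
              capR k V Rq ρ 1 p (p+1) (by omega) (ιQ k V Rq ∘ₗ oneW k V Rq))) := by
  set ιA := ιQ k V Rq with hιA
  set g : (W k V Rq 1) →ₗ[k] QuadAlg k V Rq := ιA ∘ₗ oneW k V Rq with hgdef
  constructor
  · intro p f
    have h1 : actRA ρ ∘ₗ TensorProduct.map f g
        = (actRV ιA ρ ∘ₗ LinearMap.rTensor V f) ∘ₗ
            LinearMap.lTensor (W k V Rq p) (oneW k V Rq) := by
      apply TensorProduct.ext'
      intro a b
      simp [actRA, actRV, actLA, hgdef]
    have h2 : actLA ρ ∘ₗ TensorProduct.map g f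
        = (actLV ιA ρ ∘ₗ LinearMap.lTensor V f) ∘ₗ
            LinearMap.rTensor (W k V Rq p) (oneW k V Rq) := by
      apply TensorProduct.ext'
      intro a b
      simp [actLA, actLV, actRA, hgdef]
    have h1c := congrArg (fun L : ((W k V Rq p) ⊗[k] (W k V Rq 1)) →ₗ[k] M =>
      L ∘ₗ splitAt k V Rq p 1 (p+1) rfl) h1
    have h2c := congrArg (fun L : ((W k V Rq 1) ⊗[k] (W k V Rq p)) →ₗ[k] M =>
      L ∘ₗ splitAt k V Rq 1 p (p+1) (by omega)) h2
    simp only [LinearMap.comp_assoc] at h1c h2c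
    have e2p : ((-1 : ℤ)^p) • ((-1 : ℤ)^p • (actRA ρ ∘ₗ TensorProduct.map f g ∘ₗ
        splitAt k V Rq p 1 (p+1) rfl)) = actRA ρ ∘ₗ TensorProduct.map f g ∘ₗ
        splitAt k V Rq p 1 (p+1) rfl := by
      rw [smul_smul, ← pow_add, Even.neg_one_pow ⟨p, rfl⟩, one_smul]
    simp only [bK, cupAM, cupMA, mul_one, one_mul, neg_sub, LinearMap.sub_apply,
      LinearMap.smul_apply, LinearMap.llcomp_apply', LinearMap.lcomp_apply',
      LinearMap.coe_rTensorHom, LinearMap.coe_lTensorHom, LinearMap.comp_apply, LinearMap.comp_assoc]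
    rw [e2p, ← h1c, ← h2c]
  · intro p
    have h1 : (LinearMap.rTensor (W k V Rq p) (actRA ρ ∘ₗ LinearMap.lTensor M g)) ∘ₗ
          (TensorProduct.assoc k M (W k V Rq 1) (W k V Rq p)).symm.toLinearMap
        = (LinearMap.rTensor (W k V Rq p) (actRV ιA ρ)) ∘ₗ
            (TensorProduct.assoc k M V (W k V Rq p)).symm.toLinearMap ∘ₗ
            LinearMap.lTensor M (LinearMap.rTensor (W k V Rq p) (oneW k V Rq)) := by
      apply TensorProduct.ext'
      intro m t
      induction t using TensorProduct.induction_on with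
      | zero => simp
      | tmul a b => simp [actRA, actRV, actLA, hgdef]
      | add x y hx hy => simp_all [tmul_add]
    have h2 : (LinearMap.rTensor (W k V Rq p)
            (actLA ρ ∘ₗ (TensorProduct.comm k M (QuadAlg k V Rq)).toLinearMap ∘ₗ
              LinearMap.lTensor M g)) ∘ₗ
          (TensorProduct.assoc k M (W k V Rq 1) (W k V Rq p)).symm.toLinearMap ∘ₗ
          LinearMap.lTensor M
            (TensorProduct.comm k (W k V Rq p) (W k V Rq 1)).toLinearMap
        = (LinearMap.rTensor (W k V Rq p) (actLV' ιA ρ)) ∘ₗ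
            (TensorProduct.assoc k M V (W k V Rq p)).symm.toLinearMap ∘ₗ
            LinearMap.lTensor M
              ((TensorProduct.comm k (W k V Rq p) V).toLinearMap ∘ₗ
                LinearMap.lTensor (W k V Rq p) (oneW k V Rq)) := by
      apply TensorProduct.ext'
      intro m t
      induction t using TensorProduct.induction_on with
      | zero => simp
      | tmul a b => simp [actLA, actLV', actLV, actRA, hgdef]
      | add x y hx hy => simp_all [tmul_add]
    have h1c := congrArg (fun L : (M ⊗[k] ((W k V Rq 1) ⊗[k] (W k V Rq p))) →ₗ[k]
        (M ⊗[k] (W k V Rq p)) => L ∘ₗ LinearMap.lTensor M (splitAt k V Rq 1 p (p+1) (by omega))) h1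
    have h2c := congrArg (fun L : (M ⊗[k] ((W k V Rq p) ⊗[k] (W k V Rq 1))) →ₗ[k]
        (M ⊗[k] (W k V Rq p)) => L ∘ₗ LinearMap.lTensor M (splitAt k V Rq p 1 (p+1) rfl)) h2
    simp only [LinearMap.comp_assoc, ← LinearMap.lTensor_comp] at h1c h2c
    have e2p : ∀ (C : (M ⊗[k] (W k V Rq (p+1))) →ₗ[k] (M ⊗[k] (W k V Rq p))),
        ((-1 : ℤ)^(p+1)) • (((-1 : ℤ)^(p+1)) • C) = C := by
      intro C
      rw [smul_smul, ← pow_add, Even.neg_one_pow ⟨p+1, rfl⟩, one_smul]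
    simp only [bKh, capL, capR, neg_sub, mul_one, one_mul, LinearMap.comp_assoc,
      ← LinearMap.lTensor_comp]
    rw [e2p, h1c, h2c, pow_succ]
    module
end
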